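/- arXiv:2402.12584 — 7 statements merged into one kernel-verified Lean document; each statement's English description precedes it below -/
import Mathlib

section
/- For integers 0 ≤ r ≤ c and 1 ≤ x ≤ c, the sum ∑_{t=1}^{r-1} t·C(r, t+1)·C(c−r, x−t−1) equals r·C(c−1, x−1) + C(c−r, x) − C(c, x). -/
/-- Binomial coefficient `C(a,b)` on integers, with the convention that it is
zero when `b < 0` or `b > a`. -/
def ch (a b : ℤ) : ℤ := if 0 ≤ b ∧ b ≤ a then ((a.toNat).choose b.toNat : ℤ) else 0

lemma ch_eq_choose (a b : ℤ) (ha : 0 ≤ a) (hb : 0 ≤ b) :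
    ch a b = ((a.toNat).choose b.toNat : ℤ) := by
  unfold ch
  by_cases hba : b ≤ a
  · simp [hb, hba]
  · have h : a.toNat < b.toNat := by omega
    simp [hb, hba, Nat.choose_eq_zero_of_lt h]

lemma ch_eq_zero (a b : ℤ) (hb : b < 0) : ch a b = 0 := by
  unfold ch
  rw [if_neg]
  omega

lemma vander (m n x : ℕ) :
    ∑ i ∈ Finset.range (x + 1), m.choose i * n.choose (x - i) = (m + n).choose x := by
  rw [Nat.add_choose_eq, Finset.Nat.sum_antidiagonal_eq_sum_range_succ_mk]

lemma vander2 (r n x : ℕ) (hr : 1 ≤ r) (hx : 1 ≤ x) :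
    ∑ i ∈ Finset.range (x + 1), i * r.choose i * n.choose (x - i)
      = r * (r - 1 + n).choose (x - 1) := by
  rw [Finset.sum_range_succ']
  have hr' : r - 1 + 1 = r := by omega
  have key : ∀ j, (j + 1) * r.choose (j + 1) * n.choose (x - (j + 1))
      = r * ((r - 1).choose j * n.choose (x - 1 - j)) := by
    intro j
    have h := Nat.add_one_mul_choose_eq (r - 1) j
    simp only [Nat.succ_eq_add_one, hr'] at h
    have hsub : x - (j + 1) = x - 1 - j := by omega
    rw [hsub]
    calc (j + 1) * r.choose (j + 1) * n.choose (x - 1 - j)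
        = r.choose (j + 1) * (j + 1) * n.choose (x - 1 - j) := by ring
      _ = r * (r - 1).choose j * n.choose (x - 1 - j) := by rw [← h]
      _ = r * ((r - 1).choose j * n.choose (x - 1 - j)) := by ring
  rw [Finset.sum_congr rfl (fun j _ => key j), ← Finset.mul_sum]
  have hx' : x - 1 + 1 = x := by omega
  have hv := vander (r - 1) n (x - 1)
  rw [hx'] at hv
  simp [hv]

/-- For `0 ≤ r ≤ c` and `1 ≤ x ≤ c`,
the sum `∑_{t=1}^{r-1} t·C(r,t+1)·C(c-r,x-t-1)` equals
`r·C(c-1,x-1) + C(c-r,x) - C(c,x)`. -/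
theorem sum_choose_identity (r c x : ℕ) (hrc : r ≤ c) (hx1 : 1 ≤ x) (hxc : x ≤ c) :
    ∑ t ∈ Finset.Icc 1 (r - 1),
      (t : ℤ) * ch (r : ℤ) ((t : ℤ) + 1) * ch ((c : ℤ) - r) ((x : ℤ) - t - 1)
    = (r : ℤ) * ch ((c : ℤ) - 1) ((x : ℤ) - 1) + ch ((c : ℤ) - r) (x : ℤ)
      - ch (c : ℤ) (x : ℤ) := by
  set n := c - r with hn
  have hcr : (c : ℤ) - r = (n : ℤ) := by push_cast; omega
  have h1 : ch ((c : ℤ) - 1) ((x : ℤ) - 1) = (((c - 1).choose (x - 1) : ℕ) : ℤ) := by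
    rw [ch_eq_choose _ _ (by omega) (by omega)]
    congr 2 <;> omega
  have h2 : ch ((c : ℤ) - r) (x : ℤ) = ((n.choose x : ℕ) : ℤ) := by
    rw [hcr, ch_eq_choose _ _ (by omega) (by omega)]
    congr 2 <;> omega
  have h3 : ch (c : ℤ) (x : ℤ) = ((c.choose x : ℕ) : ℤ) := by
    rw [ch_eq_choose _ _ (by omega) (by omega)]
    congr 2 <;> omega
  rw [h1, h2, h3]
  rcases Nat.eq_zero_or_pos r with hr0 | hr1
  · subst hr0
    have hnc : n = c := by omega
    rw [hnc]
    simp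
  set F : ℕ → ℤ := fun t =>
    (t : ℤ) * ch (r : ℤ) ((t : ℤ) + 1) * ch ((c : ℤ) - r) ((x : ℤ) - t - 1) with hF
  have hFr : ∀ t, r ≤ t → F t = 0 := by
    intro t ht
    have hz : ch (r : ℤ) ((t : ℤ) + 1) = 0 := by
      unfold ch; rw [if_neg]; push_neg; intro _; push_cast; omega
    simp [hF, hz]
  have hFx : ∀ t, x ≤ t → F t = 0 := by
    intro t ht
    have hz : ch ((c : ℤ) - r) ((x : ℤ) - t - 1) = 0 := ch_eq_zero _ _ (by push_cast; omega)
    simp [hF, hz]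
  have e1 : ∑ t ∈ Finset.Icc 1 (r - 1), F t = ∑ t ∈ Finset.Icc 1 c, F t := by
    refine Finset.sum_subset ?_ ?_
    · intro t ht
      simp only [Finset.mem_Icc] at ht ⊢
      omega
    · intro t ht hnt
      simp only [Finset.mem_Icc] at ht hnt
      exact hFr t (by omega)
  have e2 : ∑ t ∈ Finset.Icc 1 (x - 1), F t = ∑ t ∈ Finset.Icc 1 c, F t := by
    refine Finset.sum_subset ?_ ?_
    · intro t ht
      simp only [Finset.mem_Icc] at ht ⊢
      omega
    · intro t ht hnt
      simp only [Finset.mem_Icc] at ht hnt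
      exact hFx t (by omega)
  have e3 : ∑ t ∈ Finset.Icc 1 (x - 1), F t
      = ∑ t ∈ Finset.Icc 1 (x - 1),
          ((t : ℤ) * (r.choose (t + 1) : ℤ) * (n.choose (x - 1 - t) : ℤ)) := by
    apply Finset.sum_congr rfl
    intro t ht
    simp only [Finset.mem_Icc] at ht
    have ha : ch (r : ℤ) ((t : ℤ) + 1) = ((r.choose (t + 1) : ℕ) : ℤ) := by
      rw [ch_eq_choose _ _ (by omega) (by omega)]
      congr 2 <;> push_cast <;> omega
    have hb : ch ((c : ℤ) - r) ((x : ℤ) - t - 1) = ((n.choose (x - 1 - t) : ℕ) : ℤ) := by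
      rw [hcr, ch_eq_choose _ _ (by omega) (by push_cast; omega)]
      congr 2 <;> push_cast <;> omega
    simp [hF, ha, hb]
  have hIcc : Finset.Icc 1 (x - 1) = Finset.Ico 1 x := by
    ext t
    simp only [Finset.mem_Icc, Finset.mem_Ico]
    omega
  have e4 : ∑ t ∈ Finset.Icc 1 (x - 1),
        ((t : ℤ) * (r.choose (t + 1) : ℤ) * (n.choose (x - 1 - t) : ℤ))
      = ∑ j ∈ Finset.range (x - 1),
          (((1 + j : ℕ) : ℤ) * (r.choose (1 + j + 1) : ℤ) * (n.choose (x - 1 - (1 + j)) : ℤ)) := by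
    rw [hIcc, Finset.sum_Ico_eq_sum_range]
  -- the Vandermonde computation in ℤ
  set g : ℕ → ℤ :=
    fun i => ((i : ℤ) - 1) * (r.choose i : ℤ) * (n.choose (x - i) : ℤ) with hg
  have key : ∑ i ∈ Finset.range (x + 1), g i
      = (r : ℤ) * ((c - 1).choose (x - 1) : ℤ) - (c.choose x : ℤ) := by
    have hsplit : ∀ i : ℕ, g i
        = ((i * r.choose i * n.choose (x - i) : ℕ) : ℤ)
          - ((r.choose i * n.choose (x - i) : ℕ) : ℤ) := by
      intro i; simp only [hg]; push_cast; ring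
    rw [Finset.sum_congr rfl (fun i _ => hsplit i), Finset.sum_sub_distrib]
    have hv1 := vander2 r n x hr1 hx1
    have hv2 := vander r n x
    have hc1 : r - 1 + n = c - 1 := by omega
    have hc2 : r + n = c := by omega
    rw [hc1] at hv1
    rw [hc2] at hv2
    rw [← Nat.cast_sum, ← Nat.cast_sum, hv1, hv2]
    push_cast
    ring
  have hx' : x + 1 = (x - 1) + 1 + 1 := by omega
  have e5 : ∑ i ∈ Finset.range (x + 1), g i
      = (∑ j ∈ Finset.range (x - 1), g (j + 1 + 1)) + g (0 + 1) + g 0 := by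
    rw [hx', Finset.sum_range_succ', Finset.sum_range_succ']
  have e6 : ∑ j ∈ Finset.range (x - 1),
        (((1 + j : ℕ) : ℤ) * (r.choose (1 + j + 1) : ℤ) * (n.choose (x - 1 - (1 + j)) : ℤ))
      = ∑ j ∈ Finset.range (x - 1), g (j + 1 + 1) := by
    apply Finset.sum_congr rfl
    intro j hj
    simp only [hg]
    have hh1 : 1 + j + 1 = j + 1 + 1 := by omega
    have hh2 : x - 1 - (1 + j) = x - (j + 1 + 1) := by omega
    rw [hh1, hh2]
    push_cast
    ring
  have hg1 : g (0 + 1) = 0 := by simp [hg]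
  have hg0 : g 0 = -(n.choose x : ℤ) := by simp [hg]
  have final := key
  rw [e5, hg1, hg0] at final
  calc ∑ t ∈ Finset.Icc 1 (r - 1), F t
      = ∑ t ∈ Finset.Icc 1 (x - 1), F t := e1.trans e2.symm
    _ = ∑ t ∈ Finset.Icc 1 (x - 1),
          ((t : ℤ) * (r.choose (t + 1) : ℤ) * (n.choose (x - 1 - t) : ℤ)) := e3
    _ = ∑ j ∈ Finset.range (x - 1),
          (((1 + j : ℕ) : ℤ) * (r.choose (1 + j + 1) : ℤ) * (n.choose (x - 1 - (1 + j)) : ℤ)) := e4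
    _ = ∑ j ∈ Finset.range (x - 1), g (j + 1 + 1) := e6
    _ = (r : ℤ) * ((c - 1).choose (x - 1) : ℤ) + (n.choose x : ℤ) - (c.choose x : ℤ) := by
        linarith [final]
end

section
/- For integers 0 ≤ r ≤ c and 1 ≤ x ≤ c, the sum ∑_{t=1}^{r-1} t²·C(r, t+1)·C(c−r, x−t−1) equals r(r−1)·C(c−2, x−2) − r·C(c−1, x−1) − C(c−r, x) + C(c, x). -/
lemma ch_nat (a b : ℕ) : ch (a : ℤ) (b : ℤ) = (a.choose b : ℤ) := by
  unfold ch
  by_cases h : (b : ℤ) ≤ (a : ℤ)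
  · simp [h]
  · have hb : a < b := by exact_mod_cast not_le.mp h
    simp [h, Nat.choose_eq_zero_of_lt hb]

lemma ch_neg (a : ℤ) {b : ℤ} (hb : b < 0) : ch a b = 0 := by
  unfold ch; rw [if_neg]; rintro ⟨h, -⟩; omega

/-- Vandermonde for `ch`. -/
lemma ch_vand (m n : ℕ) (k : ℤ) :
    ∑ j ∈ Finset.range (m + 1), ch (m : ℤ) (j : ℤ) * ch (n : ℤ) (k - j) = ch ((m : ℤ) + n) k := by
  rcases lt_or_ge k 0 with hk | hk
  · rw [ch_neg _ hk]
    refine Finset.sum_eq_zero fun j _ => ?_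
    rw [ch_neg (n:ℤ) (show k - (j:ℤ) < 0 by have : (0:ℤ) ≤ j := Int.natCast_nonneg j; omega), mul_zero]
  · obtain ⟨kn, rfl⟩ := Int.eq_ofNat_of_zero_le hk
    have hmn : ((m : ℤ) + n) = ((m + n : ℕ) : ℤ) := by push_cast; ring
    rw [hmn, ch_nat]
    set T := Finset.range (min m kn + 1) with hT
    have h1 : ∑ j ∈ Finset.range (m + 1), ch (m : ℤ) (j : ℤ) * ch (n : ℤ) ((kn : ℤ) - j)
        = ∑ j ∈ T, ch (m : ℤ) (j : ℤ) * ch (n : ℤ) ((kn : ℤ) - j) := by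
      refine (Finset.sum_subset ?_ ?_).symm
      · intro j hj; simp only [hT, Finset.mem_range] at *; omega
      · intro j hj hj'
        simp only [hT, Finset.mem_range] at hj hj'
        have hjkn : kn < j := by omega
        rw [ch_neg (n:ℤ) (show (kn : ℤ) - (j:ℤ) < 0 by omega), mul_zero]
    have h2 : ((m + n).choose kn : ℤ)
        = ∑ j ∈ T, ((m.choose j : ℤ) * (n.choose (kn - j) : ℤ)) := by
      have hv := Nat.add_choose_eq m n kn
      rw [Finset.Nat.sum_antidiagonal_eq_sum_range_succ (fun a b => m.choose a * n.choose b)] at hv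
      have : ∑ j ∈ Finset.range (kn + 1), (m.choose j * n.choose (kn - j))
          = ∑ j ∈ T, (m.choose j * n.choose (kn - j)) := by
        refine (Finset.sum_subset ?_ ?_).symm
        · intro j hj; simp only [hT, Finset.mem_range] at *; omega
        · intro j hj hj'
          simp only [hT, Finset.mem_range] at hj hj'
          have : m < j := by omega
          rw [Nat.choose_eq_zero_of_lt this, zero_mul]
      rw [hv, this]; push_cast; ring_nf
    rw [h1, h2]
    refine Finset.sum_congr rfl fun j hj => ?_
    simp only [hT, Finset.mem_range] at hj
    have hjkn : j ≤ kn := by omega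
    rw [ch_nat, show ((kn : ℤ) - j) = ((kn - j : ℕ) : ℤ) by omega, ch_nat]

lemma ch_gt {a b : ℤ} (h : a < b) : ch a b = 0 := by
  unfold ch; rw [if_neg]; rintro ⟨-, h2⟩; omega

lemma term_id (r t : ℕ) (ht : 1 ≤ t) :
    (t : ℤ) ^ 2 * ch (r : ℤ) ((t : ℤ) + 1)
      = (r : ℤ) * ((r : ℤ) - 1) * ch ((r : ℤ) - 2) ((t : ℤ) - 1)
        - (r : ℤ) * ch ((r : ℤ) - 1) (t : ℤ) + ch (r : ℤ) ((t : ℤ) + 1) := by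
  rcases Nat.lt_or_ge r (t + 1) with h | h
  · rw [ch_gt (by omega : (r : ℤ) < (t : ℤ) + 1),
      ch_gt (by omega : (r : ℤ) - 2 < (t : ℤ) - 1),
      ch_gt (by omega : (r : ℤ) - 1 < (t : ℤ))]
    ring
  · -- t + 1 ≤ r, so r ≥ 2
    have hr2 : 2 ≤ r := by omega
    rw [show ((t : ℤ) + 1) = ((t + 1 : ℕ) : ℤ) by push_cast; ring,
      show ((r : ℤ) - 2) = ((r - 2 : ℕ) : ℤ) by omega,
      show ((t : ℤ) - 1) = ((t - 1 : ℕ) : ℤ) by omega,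
      show ((r : ℤ) - 1) = ((r - 1 : ℕ) : ℤ) by omega,
      ch_nat, ch_nat, ch_nat]
    have f1 : r * (r - 1).choose t = r.choose (t + 1) * (t + 1) := by
      have := Nat.add_one_mul_choose_eq (r - 1) t
      rwa [show (r-1) + 1 = r by omega] at this
    have f2 : (r - 1) * (r - 2).choose (t - 1) = (r - 1).choose t * t := by
      have := Nat.add_one_mul_choose_eq (r - 2) (t - 1)
      rwa [show (r-2) + 1 = r - 1 by omega, show (t-1) + 1 = t by omega] at this
    have f1c : (r : ℤ) * ((r - 1).choose t : ℤ) = (r.choose (t + 1) : ℤ) * ((t : ℤ) + 1) := by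
      exact_mod_cast congrArg (Nat.cast : ℕ → ℤ) f1
    have f2c : ((r : ℤ) - 1) * ((r - 2).choose (t - 1) : ℤ) = ((r - 1).choose t : ℤ) * t := by
      have := congrArg (Nat.cast : ℕ → ℤ) f2
      push_cast at this
      rw [show ((r:ℤ) - 1) = ((r - 1:ℕ):ℤ) by omega]
      exact_mod_cast this
    have hc : ((r - 1 : ℕ) : ℤ) = (r : ℤ) - 1 := by omega
    linear_combination (-(r : ℤ)) * f2c + (1 - (t : ℤ)) * f1c
      + (-(r : ℤ) * (((r - 2).choose (t - 1) : ℕ) : ℤ)) * hc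

/-- For `0 ≤ r ≤ c` and `1 ≤ x ≤ c`,
the sum `∑_{t=1}^{r-1} t²·C(r,t+1)·C(c-r,x-t-1)` equals
`r(r-1)·C(c-2,x-2) - r·C(c-1,x-1) - C(c-r,x) + C(c,x)`. -/
theorem sum_sq_choose_identity (r c x : ℕ) (hrc : r ≤ c) (hx1 : 1 ≤ x) (hxc : x ≤ c) :
    ∑ t ∈ Finset.Icc 1 (r - 1),
      (t : ℤ) ^ 2 * ch (r : ℤ) ((t : ℤ) + 1) * ch ((c : ℤ) - r) ((x : ℤ) - t - 1)
    = (r : ℤ) * ((r : ℤ) - 1) * ch ((c : ℤ) - 2) ((x : ℤ) - 2)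
      - (r : ℤ) * ch ((c : ℤ) - 1) ((x : ℤ) - 1)
      - ch ((c : ℤ) - r) (x : ℤ) + ch (c : ℤ) (x : ℤ) := by
  rcases Nat.lt_or_ge r 2 with hr2 | hr2
  · interval_cases r
    · simp
    · -- r = 1 : Pascal
      have hc1 : 1 ≤ c := hrc
      rw [show Finset.Icc 1 (1 - 1) = (∅ : Finset ℕ) by rfl]
      rw [show ((c : ℤ) - 1) = ((c - 1 : ℕ) : ℤ) by omega,
        show ((x : ℤ) - 1) = ((x - 1 : ℕ) : ℤ) by omega,
        show ((c : ℤ) - (1 : ℕ)) = ((c - 1 : ℕ) : ℤ) by omega,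
        ch_nat, ch_nat, ch_nat]
      have hp : c.choose x = (c - 1).choose (x - 1) + (c - 1).choose x := by
        have := Nat.choose_succ_succ (c - 1) (x - 1)
        simp only [Nat.succ_eq_add_one] at this
        rwa [show c - 1 + 1 = c by omega, show x - 1 + 1 = x by omega] at this
      simp only [Finset.sum_empty, Nat.cast_one]
      push_cast [hp]
      ring
  · -- main case : r ≥ 2, hence c ≥ 2
    have hc2 : 2 ≤ c := le_trans hr2 hrc
    -- rewrite summand with term_id
    have key : ∀ t ∈ Finset.Icc 1 (r - 1),
        (t : ℤ) ^ 2 * ch (r : ℤ) ((t : ℤ) + 1) * ch ((c : ℤ) - r) ((x : ℤ) - t - 1)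
        = (r : ℤ) * ((r : ℤ) - 1) * (ch ((r : ℤ) - 2) ((t : ℤ) - 1) * ch ((c : ℤ) - r) ((x : ℤ) - t - 1))
          - (r : ℤ) * (ch ((r : ℤ) - 1) (t : ℤ) * ch ((c : ℤ) - r) ((x : ℤ) - t - 1))
          + ch (r : ℤ) ((t : ℤ) + 1) * ch ((c : ℤ) - r) ((x : ℤ) - t - 1) := by
      intro t ht
      rw [Finset.mem_Icc] at ht
      rw [term_id r t ht.1]; ring
    rw [Finset.sum_congr rfl key]
    rw [Finset.sum_add_distrib, Finset.sum_sub_distrib, ← Finset.mul_sum, ← Finset.mul_sum]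
    -- convert Icc to shifted range sums
    have hIcc : Finset.Icc 1 (r - 1) = Finset.Ico 1 r := by
      rw [← Finset.Ico_add_one_right_eq_Icc]; congr 1; omega
    -- Sum 1
    have S1 : ∑ t ∈ Finset.Icc 1 (r - 1),
        ch ((r : ℤ) - 2) ((t : ℤ) - 1) * ch ((c : ℤ) - r) ((x : ℤ) - t - 1)
        = ch ((c : ℤ) - 2) ((x : ℤ) - 2) := by
      rw [hIcc, Finset.sum_Ico_eq_sum_range]
      have hv := ch_vand (r - 2) (c - r) ((x : ℤ) - 2)
      rw [show ((r - 2 : ℕ) : ℤ) + ((c - r : ℕ) : ℤ) = (c : ℤ) - 2 by omega] at hv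
      rw [show r - 1 = (r - 2) + 1 by omega]
      rw [← hv]
      refine Finset.sum_congr rfl fun i _ => ?_
      rw [show ((r : ℤ) - 2) = ((r - 2 : ℕ) : ℤ) by omega,
        show (((1 + i : ℕ) : ℤ) - 1) = (i : ℤ) by push_cast; ring,
        show ((c : ℤ) - r) = ((c - r : ℕ) : ℤ) by omega,
        show ((x : ℤ) - ((1 + i : ℕ) : ℤ) - 1) = (x : ℤ) - 2 - (i : ℤ) by push_cast; ring]
    -- Sum 2
    have S2 : ∑ t ∈ Finset.Icc 1 (r - 1),
        ch ((r : ℤ) - 1) (t : ℤ) * ch ((c : ℤ) - r) ((x : ℤ) - t - 1)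
        = ch ((c : ℤ) - 1) ((x : ℤ) - 1) - ch ((c : ℤ) - r) ((x : ℤ) - 1) := by
      have hv := ch_vand (r - 1) (c - r) ((x : ℤ) - 1)
      rw [show ((r - 1 : ℕ) : ℤ) + ((c - r : ℕ) : ℤ) = (c : ℤ) - 1 by omega] at hv
      rw [Finset.sum_range_succ'] at hv
      have h0 : ch ((r - 1 : ℕ) : ℤ) ((0 : ℕ) : ℤ) * ch ((c - r : ℕ) : ℤ) ((x : ℤ) - 1 - ((0 : ℕ) : ℤ))
          = ch ((c : ℤ) - r) ((x : ℤ) - 1) := by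
        rw [ch_nat, Nat.choose_zero_right,
          show ((c : ℤ) - r) = ((c - r : ℕ) : ℤ) by omega]
        push_cast
        rw [show (x : ℤ) - 1 - 0 = (x : ℤ) - 1 by ring]
        ring
      rw [h0] at hv
      have hshift : ∑ t ∈ Finset.Icc 1 (r - 1),
          ch ((r : ℤ) - 1) (t : ℤ) * ch ((c : ℤ) - r) ((x : ℤ) - t - 1)
          = ∑ i ∈ Finset.range (r - 1),
            ch ((r - 1 : ℕ) : ℤ) ((i + 1 : ℕ) : ℤ) * ch ((c - r : ℕ) : ℤ) ((x : ℤ) - 1 - ((i + 1 : ℕ) : ℤ)) := by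
        rw [hIcc, Finset.sum_Ico_eq_sum_range]
        refine Finset.sum_congr rfl fun i _ => ?_
        rw [show ((r : ℤ) - 1) = ((r - 1 : ℕ) : ℤ) by omega,
          show ((1 + i : ℕ) : ℤ) = ((i + 1 : ℕ) : ℤ) by push_cast; ring,
          show ((c : ℤ) - r) = ((c - r : ℕ) : ℤ) by omega,
          show ((x : ℤ) - ((i + 1 : ℕ) : ℤ) - 1) = (x : ℤ) - 1 - ((i + 1 : ℕ) : ℤ) by push_cast; ring]
      rw [hshift]
      linarith [hv]
    -- Sum 3
    have S3 : ∑ t ∈ Finset.Icc 1 (r - 1),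
        ch (r : ℤ) ((t : ℤ) + 1) * ch ((c : ℤ) - r) ((x : ℤ) - t - 1)
        = ch (c : ℤ) (x : ℤ) - ch ((c : ℤ) - r) (x : ℤ) - (r : ℤ) * ch ((c : ℤ) - r) ((x : ℤ) - 1) := by
      have hv := ch_vand r (c - r) (x : ℤ)
      rw [show ((r : ℕ) : ℤ) + ((c - r : ℕ) : ℤ) = (c : ℤ) by omega] at hv
      rw [Finset.sum_range_succ'] at hv
      rw [show Finset.range r = Finset.range ((r - 1) + 1) by congr 1; omega,
        Finset.sum_range_succ'] at hv
      have h0 : ch ((r : ℕ) : ℤ) ((0 : ℕ) : ℤ) * ch ((c - r : ℕ) : ℤ) ((x : ℤ) - ((0 : ℕ) : ℤ))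
          = ch ((c : ℤ) - r) (x : ℤ) := by
        rw [ch_nat, Nat.choose_zero_right, show ((c : ℤ) - r) = ((c - r : ℕ) : ℤ) by omega]
        push_cast; ring_nf
      have h1 : ch ((r : ℕ) : ℤ) ((0 + 1 : ℕ) : ℤ) * ch ((c - r : ℕ) : ℤ) ((x : ℤ) - ((0 + 1 : ℕ) : ℤ))
          = (r : ℤ) * ch ((c : ℤ) - r) ((x : ℤ) - 1) := by
        rw [ch_nat, show (0 + 1 : ℕ) = 1 by rfl, Nat.choose_one_right,
          show ((c : ℤ) - r) = ((c - r : ℕ) : ℤ) by omega]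
        push_cast; ring_nf
      rw [h0, h1] at hv
      have hshift : ∑ t ∈ Finset.Icc 1 (r - 1),
          ch (r : ℤ) ((t : ℤ) + 1) * ch ((c : ℤ) - r) ((x : ℤ) - t - 1)
          = ∑ i ∈ Finset.range (r - 1),
            ch ((r : ℕ) : ℤ) ((i + 1 + 1 : ℕ) : ℤ) * ch ((c - r : ℕ) : ℤ) ((x : ℤ) - ((i + 1 + 1 : ℕ) : ℤ)) := by
        rw [hIcc, Finset.sum_Ico_eq_sum_range]
        refine Finset.sum_congr rfl fun i _ => ?_
        rw [show (((1 + i : ℕ) : ℤ) + 1) = ((i + 1 + 1 : ℕ) : ℤ) by push_cast; ring,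
          show ((c : ℤ) - r) = ((c - r : ℕ) : ℤ) by omega,
          show ((x : ℤ) - ((1 + i : ℕ) : ℤ) - 1) = (x : ℤ) - ((i + 1 + 1 : ℕ) : ℤ) by push_cast; ring]
      rw [hshift]
      linarith [hv]
    rw [S1, S2, S3]
    ring
end

section
/- For integers 0 ≤ 2r ≤ c and 0 ≤ x ≤ c, the double sum ∑_{t=2}^{r} ∑_{u=2}^{r} (t−1)(u−1)·C(r,t)·C(r,u)·C(c−2r, x−t−u) equals r²·C(c−2, x−2) − 2r·C(c−1, x−1) + C(c, x) − 2·C(c−r, x) + 2r·C(c−r−1, x−1) + C(c−2r, x). -/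
lemma ch_natCast (m : ℕ) (j : ℤ) :
    ch (m : ℤ) j = if 0 ≤ j then ((m.choose j.toNat : ℕ) : ℤ) else 0 := by
  unfold ch
  by_cases hj : 0 ≤ j
  · by_cases hm : j ≤ (m : ℤ)
    · rw [if_pos ⟨hj, hm⟩, if_pos hj, Int.toNat_natCast]
    · rw [if_neg (by tauto), if_pos hj, Nat.choose_eq_zero_of_lt (by omega), Nat.cast_zero]
  · rw [if_neg (by tauto), if_neg hj]

lemma natVand (r m n : ℕ) :
    ∑ t ∈ Finset.range (r + 1), r.choose t * (if t ≤ n then m.choose (n - t) else 0)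
      = (m + r).choose n := by
  have h := Nat.add_choose_eq r m n
  rw [Finset.Nat.sum_antidiagonal_eq_sum_range_succ_mk] at h
  rw [Nat.add_comm m r, h]
  set f : ℕ → ℕ := fun t => if t ≤ n then r.choose t * m.choose (n - t) else 0 with hf
  have e1 : ∑ t ∈ Finset.range (r+1), r.choose t * (if t ≤ n then m.choose (n-t) else 0)
      = ∑ t ∈ Finset.range (r+1), f t := by
    refine Finset.sum_congr rfl fun t _ => ?_
    by_cases h : t ≤ n <;> simp [hf, h]
  have e2 : ∑ t ∈ Finset.range (r+1), f t = ∑ t ∈ Finset.range (r+n+2), f t := by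
    refine Finset.sum_subset (Finset.range_subset_range.2 (by omega)) ?_
    intro t _ ht
    simp only [Finset.mem_range, not_lt] at ht
    simp [hf, Nat.choose_eq_zero_of_lt (show r < t by omega)]
  have e3 : ∑ t ∈ Finset.range (n+1), r.choose t * m.choose (n - t)
      = ∑ t ∈ Finset.range (r+n+2), f t := by
    have e4 : ∑ t ∈ Finset.range (n+1), r.choose t * m.choose (n - t)
        = ∑ t ∈ Finset.range (n+1), f t := by
      refine Finset.sum_congr rfl fun t ht => ?_
      simp only [Finset.mem_range] at ht
      simp [hf, show t ≤ n by omega]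
    rw [e4]
    refine Finset.sum_subset (Finset.range_subset_range.2 (by omega)) ?_
    intro t _ ht
    simp only [Finset.mem_range, not_lt] at ht
    simp [hf, show ¬ (t ≤ n) by omega]
  rw [e1, e2, ← e3]

lemma vand (r m : ℕ) (k : ℤ) :
    ∑ t ∈ Finset.range (r + 1), (r.choose t : ℤ) * ch (m : ℤ) (k - t)
      = ch ((m + r : ℕ) : ℤ) k := by
  rcases lt_or_ge k 0 with hk | hk
  · rw [ch_natCast, if_neg (by omega)]
    refine Finset.sum_eq_zero fun t _ => ?_
    rw [ch_natCast, if_neg (by omega), mul_zero]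
  · obtain ⟨n, rfl⟩ : ∃ n : ℕ, k = (n : ℤ) := ⟨k.toNat, by omega⟩
    rw [ch_natCast, if_pos hk, Int.toNat_natCast]
    rw [← natVand r m n, Nat.cast_sum]
    refine Finset.sum_congr rfl fun t _ => ?_
    rw [ch_natCast, Nat.cast_mul]
    by_cases h : t ≤ n
    · rw [if_pos (by push_cast; omega)]
      have h2 : ((n:ℤ) - t).toNat = n - t := by omega
      rw [h2, if_pos h]
    · rw [if_neg (by push_cast; omega), if_neg h, Nat.cast_zero, mul_zero]

lemma vandT (s m : ℕ) (k : ℤ) :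
    ∑ t ∈ Finset.range (s + 1 + 1), (t : ℤ) * ((s+1).choose t : ℤ) * ch (m:ℤ) (k - t)
      = ((s + 1 : ℕ) : ℤ) * ch ((m + s : ℕ) : ℤ) (k - 1) := by
  rw [Finset.sum_range_succ']
  simp only [Nat.cast_zero, zero_mul, add_zero]
  rw [← vand s m (k - 1), Finset.mul_sum]
  refine Finset.sum_congr rfl fun i _ => ?_
  have harg : k - ((i + 1 : ℕ) : ℤ) = (k - 1) - (i : ℤ) := by push_cast; ring
  rw [harg]
  have h3' := Nat.add_one_mul_choose_eq s i
  have h3 : ((i + 1 : ℕ) : ℤ) * ((s+1).choose (i+1) : ℤ)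
      = ((s + 1 : ℕ) : ℤ) * (s.choose i : ℤ) := by
    rw [← Nat.cast_mul, ← Nat.cast_mul, h3', Nat.mul_comm]
  linear_combination ch ((m:ℤ)) (k - 1 - (i:ℤ)) * h3

lemma keyS (s m : ℕ) (k : ℤ) :
    ∑ t ∈ Finset.Icc 2 (s+1), ((t:ℤ) - 1) * ((s+1).choose t : ℤ) * ch (m:ℤ) (k - t)
      = ((s+1:ℕ):ℤ) * ch ((m + s : ℕ):ℤ) (k - 1) - ch ((m + s + 1 : ℕ):ℤ) k + ch (m:ℤ) k := by
  have hfull : ∑ t ∈ Finset.range (s + 1 + 1), ((t:ℤ) - 1) * ((s+1).choose t : ℤ) * ch (m:ℤ) (k - t)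
      = ((s+1:ℕ):ℤ) * ch ((m + s : ℕ):ℤ) (k - 1) - ch ((m + s + 1 : ℕ):ℤ) k := by
    have e : ∀ t ∈ Finset.range (s+1+1), ((t:ℤ) - 1) * ((s+1).choose t : ℤ) * ch (m:ℤ) (k - t)
        = (t:ℤ) * ((s+1).choose t : ℤ) * ch (m:ℤ) (k - t)
          - ((s+1).choose t : ℤ) * ch (m:ℤ) (k - t) := fun t _ => by ring
    rw [Finset.sum_congr rfl e, Finset.sum_sub_distrib, vandT s m k, vand (s+1) m k]
    rfl
  set F : ℕ → ℤ := fun t => ((t:ℤ) - 1) * ((s+1).choose t : ℤ) * ch (m:ℤ) (k - t) with hF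
  have hsplit : ∑ t ∈ Finset.range (s+1+1), F t
      = ∑ i ∈ Finset.range s, F (i+1+1) + F 1 + F 0 := by
    rw [Finset.sum_range_succ', Finset.sum_range_succ']
  have hIcc : ∑ t ∈ Finset.Icc 2 (s+1), F t = ∑ i ∈ Finset.range s, F (i+1+1) := by
    rw [← Finset.Ico_add_one_right_eq_Icc, Finset.sum_Ico_eq_sum_range]
    rw [show s + 1 + 1 - 2 = s from by omega]
    exact Finset.sum_congr rfl fun i _ => by rw [show 2 + i = i + 1 + 1 from by omega]
  have hF1 : F 1 = 0 := by simp [hF]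
  have hF0 : F 0 = - ch (m:ℤ) k := by simp [hF]
  have := hfull
  rw [hsplit, hF1, hF0] at this
  rw [hIcc]
  linarith

/-- For `0 ≤ 2r ≤ c` and `0 ≤ x ≤ c`, the double sum
`∑_{t=2}^{r} ∑_{u=2}^{r} (t-1)(u-1)·C(r,t)·C(r,u)·C(c-2r,x-t-u)` equals
`r²·C(c-2,x-2) - 2r·C(c-1,x-1) + C(c,x) - 2·C(c-r,x) + 2r·C(c-r-1,x-1) + C(c-2r,x)`. -/
theorem double_sum_choose_identity (r c x : ℕ) (hrc : 2 * r ≤ c) (hxc : x ≤ c) :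
    ∑ t ∈ Finset.Icc 2 r, ∑ u ∈ Finset.Icc 2 r,
      ((t : ℤ) - 1) * ((u : ℤ) - 1) * ch (r : ℤ) (t : ℤ) * ch (r : ℤ) (u : ℤ)
        * ch ((c : ℤ) - 2 * r) ((x : ℤ) - t - u)
    = (r : ℤ) ^ 2 * ch ((c : ℤ) - 2) ((x : ℤ) - 2)
      - 2 * (r : ℤ) * ch ((c : ℤ) - 1) ((x : ℤ) - 1)
      + ch (c : ℤ) (x : ℤ)
      - 2 * ch ((c : ℤ) - r) (x : ℤ)
      + 2 * (r : ℤ) * ch ((c : ℤ) - r - 1) ((x : ℤ) - 1)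
      + ch ((c : ℤ) - 2 * r) (x : ℤ) := by
  rcases Nat.eq_zero_or_pos r with rfl | hr
  · rw [Finset.Icc_eq_empty (by omega), Finset.sum_empty]
    simp
    ring
  · obtain ⟨s, rfl⟩ : ∃ s, r = s + 1 := ⟨r - 1, by omega⟩
    set m : ℕ := c - 2 * (s + 1) with hmdef
    have hcm : c = m + 2 * s + 2 := by omega
    have hF : (c : ℤ) - 2 * ((s+1:ℕ):ℤ) = ((m : ℕ) : ℤ) := by push_cast; omega
    have cht : ∀ t ∈ Finset.Icc 2 (s+1), ch ((s+1:ℕ):ℤ) (t:ℤ) = (((s+1).choose t : ℕ) : ℤ) := by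
      intro t ht
      simp only [Finset.mem_Icc] at ht
      rw [ch_natCast, if_pos (by omega), Int.toNat_natCast]
    have step1 : ∀ t ∈ Finset.Icc 2 (s+1),
        (∑ u ∈ Finset.Icc 2 (s+1), ((t:ℤ) - 1) * ((u:ℤ) - 1) * ch ((s+1:ℕ):ℤ) (t:ℤ)
            * ch ((s+1:ℕ):ℤ) (u:ℤ) * ch ((c:ℤ) - 2 * ((s+1:ℕ):ℤ)) ((x:ℤ) - t - u))
        = ((t:ℤ) - 1) * ((s+1).choose t : ℤ) *
            (((s+1:ℕ):ℤ) * ch ((m + s : ℕ):ℤ) ((x:ℤ) - t - 1)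
              - ch ((m + s + 1 : ℕ):ℤ) ((x:ℤ) - t) + ch ((m:ℕ):ℤ) ((x:ℤ) - t)) := by
      intro t ht
      rw [← keyS s m ((x:ℤ) - t), Finset.mul_sum]
      refine Finset.sum_congr rfl fun u hu => ?_
      rw [cht t ht, cht u hu, hF]
      ring
    rw [Finset.sum_congr rfl step1]
    have step2 : ∑ t ∈ Finset.Icc 2 (s+1), ((t:ℤ) - 1) * ((s+1).choose t : ℤ) *
            (((s+1:ℕ):ℤ) * ch ((m + s : ℕ):ℤ) ((x:ℤ) - t - 1)
              - ch ((m + s + 1 : ℕ):ℤ) ((x:ℤ) - t) + ch ((m:ℕ):ℤ) ((x:ℤ) - t))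
        = ((s+1:ℕ):ℤ) * (∑ t ∈ Finset.Icc 2 (s+1),
              ((t:ℤ) - 1) * ((s+1).choose t : ℤ) * ch ((m + s : ℕ):ℤ) (((x:ℤ) - 1) - t))
          - (∑ t ∈ Finset.Icc 2 (s+1),
              ((t:ℤ) - 1) * ((s+1).choose t : ℤ) * ch ((m + s + 1 : ℕ):ℤ) ((x:ℤ) - t))
          + (∑ t ∈ Finset.Icc 2 (s+1),
              ((t:ℤ) - 1) * ((s+1).choose t : ℤ) * ch ((m:ℕ):ℤ) ((x:ℤ) - t)) := by
      rw [Finset.mul_sum, ← Finset.sum_sub_distrib, ← Finset.sum_add_distrib]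
      refine Finset.sum_congr rfl fun t _ => ?_
      rw [show (x:ℤ) - 1 - t = (x:ℤ) - t - 1 from by ring]
      ring
    rw [step2, keyS s (m+s) ((x:ℤ) - 1), keyS s (m+s+1) (x:ℤ), keyS s m (x:ℤ)]
    rw [show (x:ℤ) - 1 - 1 = (x:ℤ) - 2 from by ring]
    rw [show m + s + 1 + s = m + s + s + 1 from by omega]
    have hA : (c : ℤ) - 2 = ((m + s + s : ℕ) : ℤ) := by push_cast; omega
    have hB : (c : ℤ) - 1 = ((m + s + s + 1 : ℕ) : ℤ) := by push_cast; omega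
    have hC : (c : ℤ) = ((m + s + s + 1 + 1 : ℕ) : ℤ) := by push_cast; omega
    have hD : (c : ℤ) - ((s+1:ℕ):ℤ) = ((m + s + 1 : ℕ) : ℤ) := by push_cast; omega
    have hE : (c : ℤ) - ((s+1:ℕ):ℤ) - 1 = ((m + s : ℕ) : ℤ) := by push_cast; omega
    rw [hA, hB, hE, hD, hF, hC]
    push_cast
    ring
end

section
/- In a balanced (n,k,r,c) assignment D, for any fixed job a_i, the sum over all x-element subsets Ŝ of the c servers of max(n_{i,Ŝ} − 1, 0), where n_{i,Ŝ} is the number of servers in Ŝ assigned job a_i, equals r·C(c−1, x−1) + C(c−r, x) − C(c, x). -/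
open Finset

/-- A balanced `(n,k,r,c)` assignment: each of the `n` jobs is assigned to exactly
`r` of the `c` servers, and each server is assigned exactly `k` jobs. -/
structure BalancedAssignment (n k r c : ℕ) where
  assign : Fin n → Finset (Fin c)
  job_deg : ∀ i : Fin n, (assign i).card = r
  server_deg : ∀ s : Fin c,
    (Finset.univ.filter (fun i : Fin n => s ∈ assign i)).card = k

/-- In a balanced `(n,k,r,c)` assignment, for any fixed job `i`, the sum over
all `x`-element subsets `Ŝ` of the servers of `max(n_{i,Ŝ} - 1, 0)` equals
`r·C(c-1,x-1) + C(c-r,x) - C(c,x)`. -/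
theorem sum_excess_single_job (n k r c x : ℕ) (hx1 : 1 ≤ x) (hxc : x ≤ c)
    (D : BalancedAssignment n k r c) (i : Fin n) :
    ∑ S ∈ Finset.powersetCard x (Finset.univ : Finset (Fin c)),
        (((D.assign i ∩ S).card - 1 : ℕ) : ℤ)
      = (r : ℤ) * ch ((c : ℤ) - 1) ((x : ℤ) - 1) + ch ((c : ℤ) - r) (x : ℤ)
        - ch (c : ℤ) (x : ℤ) := by
  classical
  set A := D.assign i with hA
  have hAcard : A.card = r := D.job_deg i
  have hrc : r ≤ c := by
    calc r = A.card := hAcard.symm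
    _ ≤ (univ : Finset (Fin c)).card := card_le_card (subset_univ A)
    _ = c := by simp
  have hc1 : 1 ≤ c := le_trans hx1 hxc
  set P := Finset.powersetCard x (Finset.univ : Finset (Fin c)) with hP
  -- number of x-subsets containing a fixed element
  have hcount : ∀ s : Fin c, (P.filter (fun S => s ∈ S)).card = (c-1).choose (x-1) := by
    intro s
    have h1 : P.filter (fun S => s ∉ S)
        = powersetCard x ((univ : Finset (Fin c)).erase s) := by
      ext S
      simp only [hP, mem_filter, mem_powersetCard, subset_univ, true_and,
        Finset.subset_erase]
      tauto
    have h2 : (P.filter (fun S => s ∉ S)).card = (c-1).choose x := by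
      rw [h1, card_powersetCard, card_erase_of_mem (mem_univ s)]
      simp
    have h3 : (P.filter (fun S => s ∈ S)).card + (P.filter (fun S => s ∉ S)).card
        = P.card := card_filter_add_card_filter_not _
    have hPcard : P.card = c.choose x := by
      rw [hP, card_powersetCard]; simp
    have hpascal : c.choose x = (c-1).choose (x-1) + (c-1).choose x := by
      obtain ⟨c', rfl⟩ := Nat.exists_eq_add_of_le hc1
      obtain ⟨x', rfl⟩ := Nat.exists_eq_add_of_le hx1
      simp [Nat.add_comm 1, Nat.choose_succ_succ, Nat.add_comm]
    omega
  -- sum of intersection sizes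
  have hsum1 : ∑ S ∈ P, (A ∩ S).card = r * (c-1).choose (x-1) := by
    have hAS : ∀ S : Finset (Fin c), (A ∩ S).card = ∑ s ∈ A, (if s ∈ S then 1 else 0) := by
      intro S
      rw [← Finset.filter_mem_eq_inter, Finset.card_filter]
    calc ∑ S ∈ P, (A ∩ S).card = ∑ S ∈ P, ∑ s ∈ A, (if s ∈ S then 1 else 0) := by
          exact Finset.sum_congr rfl fun S _ => hAS S
      _ = ∑ s ∈ A, ∑ S ∈ P, (if s ∈ S then 1 else 0) := Finset.sum_comm
      _ = ∑ s ∈ A, (P.filter (fun S => s ∈ S)).card := by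
          exact Finset.sum_congr rfl fun s _ => by
            rw [Finset.card_filter]
      _ = ∑ s ∈ A, (c-1).choose (x-1) := Finset.sum_congr rfl fun s _ => hcount s
      _ = r * (c-1).choose (x-1) := by rw [Finset.sum_const, hAcard, smul_eq_mul]
  -- number of x-subsets disjoint from A
  have hempty : (P.filter (fun S => (A ∩ S).card = 0)).card = (c - r).choose x := by
    have h1 : P.filter (fun S => (A ∩ S).card = 0)
        = powersetCard x ((univ : Finset (Fin c)) \ A) := by
      ext S
      constructor
      · intro hS
        obtain ⟨hSP, hAS⟩ := Finset.mem_filter.mp hS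
        obtain ⟨-, hcard⟩ := Finset.mem_powersetCard.mp hSP
        rw [Finset.card_eq_zero] at hAS
        refine Finset.mem_powersetCard.mpr
          ⟨fun a haS => Finset.mem_sdiff.mpr ⟨mem_univ a, fun haA => ?_⟩, hcard⟩
        exact Finset.notMem_empty a (hAS ▸ Finset.mem_inter.mpr ⟨haA, haS⟩)
      · intro hS
        obtain ⟨hsub, hcard⟩ := Finset.mem_powersetCard.mp hS
        refine Finset.mem_filter.mpr
          ⟨Finset.mem_powersetCard.mpr ⟨subset_univ S, hcard⟩, ?_⟩
        rw [Finset.card_eq_zero]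
        exact Finset.eq_empty_iff_forall_notMem.mpr fun a ha =>
          (Finset.mem_sdiff.mp (hsub (Finset.mem_inter.mp ha).2)).2
            (Finset.mem_inter.mp ha).1
    rw [h1, card_powersetCard, Finset.card_sdiff_of_subset (subset_univ A), hAcard]
    simp
  have hnonempty : (P.filter (fun S => ¬ (A ∩ S).card = 0)).card
      = c.choose x - (c - r).choose x := by
    have h3 : (P.filter (fun S => (A ∩ S).card = 0)).card
        + (P.filter (fun S => ¬ (A ∩ S).card = 0)).card = P.card :=
      card_filter_add_card_filter_not _
    have hPcard : P.card = c.choose x := by rw [hP, card_powersetCard]; simp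
    omega
  have hle : (c - r).choose x ≤ c.choose x := by
    have h3 : (P.filter (fun S => (A ∩ S).card = 0)).card
        + (P.filter (fun S => ¬ (A ∩ S).card = 0)).card = P.card :=
      card_filter_add_card_filter_not _
    have hPcard : P.card = c.choose x := by rw [hP, card_powersetCard]; simp
    omega
  -- rewrite LHS
  have hLHS : ∑ S ∈ P, (((A ∩ S).card - 1 : ℕ) : ℤ)
      = (∑ S ∈ P, ((A ∩ S).card : ℤ))
        - ∑ S ∈ P, (if (A ∩ S).card = 0 then (0:ℤ) else 1) := by
    rw [← Finset.sum_sub_distrib]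
    refine Finset.sum_congr rfl fun S _ => ?_
    rcases Nat.eq_zero_or_pos (A ∩ S).card with h | h
    · simp [h]
    · have : (A ∩ S).card ≠ 0 := Nat.pos_iff_ne_zero.mp h
      simp only [this, if_false]
      omega
  have hsum2 : ∑ S ∈ P, (if (A ∩ S).card = 0 then (0:ℤ) else 1)
      = ((c.choose x : ℤ) - ((c-r).choose x : ℤ)) := by
    have : ∑ S ∈ P, (if (A ∩ S).card = 0 then (0:ℤ) else 1)
        = ((P.filter (fun S => ¬ (A ∩ S).card = 0)).card : ℤ) := by
      rw [Finset.card_filter]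
      push_cast
      exact Finset.sum_congr rfl fun S _ => by
        by_cases h : (A ∩ S).card = 0 <;> simp [h]
    rw [this, hnonempty]
    push_cast [Nat.cast_sub hle]
    ring
  -- compute the ch values
  have hch1 : ch ((c : ℤ) - 1) ((x : ℤ) - 1) = ((c-1).choose (x-1) : ℤ) := by
    have hcond : (0:ℤ) ≤ (x:ℤ) - 1 ∧ (x:ℤ) - 1 ≤ (c:ℤ) - 1 := by
      constructor <;> [skip; skip] <;>
        · have := hx1; have := hxc; omega
    rw [ch, if_pos hcond]
    congr 1
    have h1 : ((c:ℤ) - 1).toNat = c - 1 := by omega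
    have h2 : ((x:ℤ) - 1).toNat = x - 1 := by omega
    rw [h1, h2]
  have hch2 : ch ((c : ℤ) - r) (x : ℤ) = ((c - r).choose x : ℤ) := by
    by_cases h : x ≤ c - r
    · have hcond : (0:ℤ) ≤ (x:ℤ) ∧ (x:ℤ) ≤ (c:ℤ) - r := by
        constructor
        · positivity
        · omega
      rw [ch, if_pos hcond]
      have h1 : ((c:ℤ) - r).toNat = c - r := by omega
      have h2 : ((x:ℤ)).toNat = x := by omega
      rw [h1, h2]
    · have hlt : c - r < x := Nat.lt_of_not_le h
      have : ¬ ((0:ℤ) ≤ (x:ℤ) ∧ (x:ℤ) ≤ (c:ℤ) - r) := by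
        push_neg
        intro _
        omega
      rw [ch, if_neg this, Nat.choose_eq_zero_of_lt hlt]
      simp
  have hch3 : ch (c : ℤ) (x : ℤ) = (c.choose x : ℤ) := by
    have hcond : (0:ℤ) ≤ (x:ℤ) ∧ (x:ℤ) ≤ (c:ℤ) := by
      constructor
      · positivity
      · exact_mod_cast hxc
    rw [ch, if_pos hcond]
    simp
  rw [hLHS, hsum2, hch1, hch2, hch3]
  have : (∑ S ∈ P, ((A ∩ S).card : ℤ)) = ((r * (c-1).choose (x-1) : ℕ) : ℤ) := by
    rw [← hsum1]; push_cast; rfl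
  rw [this]
  push_cast
  ring
end

section
/- Let H be the 2×(r+1) matrix with first row all ones and second row (0,1,2,…,r). Let v ∈ ker H with integer entries such that v(i) ≥ 0 for all indices i except possibly i = ℓ+1 and i = ℓ+2 (1-indexed). Write v = ∑_{i=1}^{r−1} α_i h_i where h_i is the vector with entries 1, −2, 1 in positions i, i+1, i+2 and 0 elsewhere. Then all coefficients α_i are nonnegative. -/
/-- The `i`-th basis vector of the kernel of `H` (0-indexed): entries `1, -2, 1`
at positions `i, i+1, i+2` and `0` elsewhere. -/
def basisVec (i j : ℕ) : ℤ :=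
  if j = i then 1 else if j = i + 1 then -2 else if j = i + 2 then 1 else 0

lemma basisVec_eq (m j : ℕ) :
    basisVec m j =
      (if j = m then (1:ℤ) else 0) + (if j = m + 1 then -2 else 0) +
        (if j = m + 2 then 1 else 0) := by
  unfold basisVec
  split_ifs <;> omega

lemma key1 (i m : ℕ) :
    ∑ j ∈ Finset.range (i + 1), ((i : ℤ) + 1 - j) * basisVec m j =
      if m = i then 1 else 0 := by
  simp only [basisVec_eq, mul_add, Finset.sum_add_distrib, mul_ite, mul_zero,
    Finset.sum_ite_eq', Finset.mem_range]
  split_ifs <;> push_cast <;> omega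

lemma key2 (r i m : ℕ) (hi : i + 2 ≤ r) (hm : m + 2 ≤ r) :
    ∑ j ∈ Finset.Ico (i + 2) (r + 1), ((j : ℤ) - i - 1) * basisVec m j =
      if m = i then 1 else 0 := by
  simp only [basisVec_eq, mul_add, Finset.sum_add_distrib, mul_ite, mul_zero,
    Finset.sum_ite_eq', Finset.mem_Ico]
  split_ifs <;> push_cast <;> omega

lemma repr_lemma (r : ℕ) (v α : ℕ → ℤ)
    (hv : ∀ j, v j = ∑ i ∈ Finset.range (r - 1), α i * basisVec i j)
    (s : Finset ℕ) (c : ℕ → ℤ) (i : ℕ) (hi : i < r - 1)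
    (hkey : ∀ m, m < r - 1 → ∑ j ∈ s, c j * basisVec m j = if m = i then 1 else 0) :
    α i = ∑ j ∈ s, c j * v j := by
  have h1 : ∑ j ∈ s, c j * v j
      = ∑ m ∈ Finset.range (r - 1), α m * ∑ j ∈ s, c j * basisVec m j := by
    simp only [hv, Finset.mul_sum]
    rw [Finset.sum_comm]
    exact Finset.sum_congr rfl fun _ _ => Finset.sum_congr rfl fun _ _ => by ring
  rw [h1, Finset.sum_congr rfl fun m hm => by
    rw [hkey m (Finset.mem_range.mp hm)]]
  simp [Finset.sum_ite_eq', hi]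

/-- Let `v ∈ ℤ^{r+1}` (indexed `0,…,r`) be in the kernel of `H`, written as
`v = ∑ α_i h_i` in the basis `h_i = (…,1,-2,1,…)`, and suppose `v(j) ≥ 0` for
all indices `j` except possibly `j = ℓ` and `j = ℓ+1` (0-indexed). Then all
coefficients `α_i` are nonnegative. -/
theorem kernel_coeffs_nonneg (r : ℕ) (hr : 2 ≤ r) (ℓ : ℕ) (hℓ : ℓ ≤ r - 1)
    (v α : ℕ → ℤ)
    (hv : ∀ j, v j = ∑ i ∈ Finset.range (r - 1), α i * basisVec i j)
    (hnonneg : ∀ j, j ≤ r → j ≠ ℓ → j ≠ ℓ + 1 → 0 ≤ v j) :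
    ∀ i, i < r - 1 → 0 ≤ α i := by
  intro i hi
  rcases le_or_gt (i + 1) ℓ with hcase | hcase
  · -- ℓ ≥ i + 1 : use the lower formula
    have hrepr := repr_lemma r v α hv (Finset.range (i + 1))
      (fun j => (i : ℤ) + 1 - j) i hi (fun m _ => key1 i m)
    rw [hrepr]
    apply Finset.sum_nonneg
    intro j hj
    rw [Finset.mem_range] at hj
    apply mul_nonneg
    · show (0:ℤ) ≤ (i : ℤ) + 1 - j
      omega
    · exact hnonneg j (by omega) (by omega) (by omega)
  · -- ℓ ≤ i : use the upper formula
    have hrepr := repr_lemma r v α hv (Finset.Ico (i + 2) (r + 1))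
      (fun j => (j : ℤ) - i - 1) i hi
      (fun m hm => key2 r i m (by omega) (by omega))
    rw [hrepr]
    apply Finset.sum_nonneg
    intro j hj
    rw [Finset.mem_Ico] at hj
    apply mul_nonneg
    · show (0:ℤ) ≤ (j : ℤ) - i - 1
      omega
    · exact hnonneg j (by omega) (by omega) (by omega)
end

section
/- Let H be the 2×(r+1) matrix with first row all ones and second row (0,1,…,r). Let v ∈ ker H be a nonzero integer vector with v(i) ≥ 0 for all 1 < i < r+1 (so only the first and last entries may be negative). Write v = ∑_{i=1}^{r−1} α_i h_i in the basis where h_i has entries 1,−2,1 at positions i,i+1,i+2. Then all α_i ≤ 0, and moreover α_1 ≤ α_2/2 ≤ α_3/3 ≤ ⋯ ≤ α_{r−1}/(r−1) ≤ 0. -/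
lemma sum_basisVec (α : ℕ → ℤ) (n j : ℕ) :
    ∑ i ∈ Finset.range n, α i * basisVec i j =
      (if j < n then α j else 0)
      + (if 1 ≤ j ∧ j - 1 < n then -2 * α (j-1) else 0)
      + (if 2 ≤ j ∧ j - 2 < n then α (j-2) else 0) := by
  induction n with
  | zero => simp
  | succ n ih =>
    rw [Finset.sum_range_succ, ih, basisVec]
    split_ifs <;> first
      | (exfalso; omega)
      | ring1
      | (rw [show n = j from by omega]; try ring1)
      | (rw [show n = j - 1 from by omega]; try ring1)
      | (rw [show n = j - 2 from by omega]; try ring1)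

lemma chain_aux (r : ℕ) (f : ℕ → ℤ) (h0 : f 0 = 0)
    (hconv : ∀ j, j < r - 1 → 2 * f (j+1) ≤ f j + f (j+2)) :
    ∀ m, m ≤ r - 1 → ((m:ℤ)+1) * f m ≤ (m:ℤ) * f (m+1) := by
  intro m
  induction m with
  | zero => intro _; simp [h0]
  | succ m ih =>
    intro hm
    have h1 := ih (by omega)
    have h2 := hconv m (by omega)
    have h3 := mul_le_mul_of_nonneg_left h2 (by positivity : (0:ℤ) ≤ (m:ℤ)+1)
    push_cast
    nlinarith [h1, h3]

lemma nonpos_aux (r : ℕ) (hr : 1 ≤ r) (f : ℕ → ℤ) (h0 : f 0 = 0) (hrr : f r = 0)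
    (hconv : ∀ j, j < r - 1 → 2 * f (j+1) ≤ f j + f (j+2)) :
    ∀ m, m ≤ r - 1 → f m ≤ 0 := by
  have hlast : f (r-1) ≤ 0 := by
    have h := chain_aux r f h0 hconv (r-1) le_rfl
    rw [show r - 1 + 1 = r by omega, hrr, mul_zero] at h
    nlinarith [h, (by positivity : (0:ℤ) < ((r-1:ℕ):ℤ) + 1)]
  have key : ∀ k m, m + k = r - 1 → f m ≤ 0 := by
    intro k
    induction k with
    | zero => intro m hm; rw [show m = r - 1 by omega]; exact hlast
    | succ k ih =>
      intro m hm
      have h1 := ih (m+1) (by omega)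
      have h2 := chain_aux r f h0 hconv m (by omega)
      nlinarith [h2, h1, (by positivity : (0:ℤ) < (m:ℤ) + 1),
        mul_nonpos_of_nonneg_of_nonpos (by positivity : (0:ℤ) ≤ (m:ℤ)) h1]
  intro m hm
  exact key (r - 1 - m) m (by omega)

/-- Let `v ∈ ℤ^{r+1}` (indexed `0,…,r`) be a nonzero kernel vector of `H`,
written `v = ∑ α_i h_i`, whose interior entries are nonnegative (only the first
and last entries may be negative). Then all `α_i ≤ 0`, and moreover
`α_1 ≤ α_2/2 ≤ ⋯ ≤ α_{r-1}/(r-1) ≤ 0` (here stated with 0-indexed `α`, i.e.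
`(i+2)·α_i ≤ (i+1)·α_{i+1}`). -/
theorem kernel_coeffs_nonpos_chain (r : ℕ) (hr : 2 ≤ r) (v α : ℕ → ℤ)
    (hv : ∀ j, v j = ∑ i ∈ Finset.range (r - 1), α i * basisVec i j)
    (hvne : ∃ j, j ≤ r ∧ v j ≠ 0)
    (hnonneg : ∀ j, 0 < j → j < r → 0 ≤ v j) :
    (∀ i, i < r - 1 → α i ≤ 0)
      ∧ (∀ i, i + 1 < r - 1 → ((i : ℤ) + 2) * α i ≤ ((i : ℤ) + 1) * α (i + 1)) := by
  set f : ℕ → ℤ := fun j => if 1 ≤ j ∧ j - 1 < r - 1 then α (j-1) else 0 with hf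
  have hfval : ∀ i, i < r - 1 → f (i+1) = α i := by
    intro i hi
    simp only [hf]
    rw [if_pos ⟨by omega, by omega⟩, Nat.add_sub_cancel]
  have h0 : f 0 = 0 := by simp [hf]
  have hrr : f r = 0 := by
    simp only [hf]
    rw [if_neg (by omega)]
  have hconv : ∀ j, j < r - 1 → 2 * f (j+1) ≤ f j + f (j+2) := by
    intro j hj
    have hvj := hnonneg (j+1) (by omega) (by omega)
    rw [hv, sum_basisVec] at hvj
    have e1 : (if j + 1 < r - 1 then α (j+1) else 0) = f (j+2) := by
      simp only [hf]
      split_ifs with h1 h2 <;> first | (congr 1; omega) | (exfalso; omega) | rfl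
    have e2 : (if 1 ≤ j + 1 ∧ j + 1 - 1 < r - 1 then -2 * α (j+1-1) else 0)
        = -2 * f (j+1) := by
      simp only [hf]
      split_ifs with h1 h2 <;> first | (congr 2; omega) | (exfalso; omega) | ring
    have e3 : (if 2 ≤ j + 1 ∧ j + 1 - 2 < r - 1 then α (j+1-2) else 0) = f j := by
      simp only [hf]
      split_ifs with h1 h2 <;> first | (congr 1; omega) | (exfalso; omega) | rfl
    rw [e1, e2, e3] at hvj
    linarith
  constructor
  · intro i hi
    rw [← hfval i hi]
    exact nonpos_aux r (by omega) f h0 hrr hconv (i+1) (by omega)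
  · intro i hi
    have h := chain_aux r f h0 hconv (i+1) (by omega)
    rw [hfval i (by omega), show i + 1 + 1 = i + 2 from rfl,
      hfval (i+1) (by omega)] at h
    push_cast at h
    linarith
end

section
/- If a stretched compact balanced (n,k,r,c) assignment D exists, then for every x with 1 ≤ x ≤ c and every balanced (n,k,r,c) assignment D₁: ∑_{m=0}^{r} m^{D₁}(m)·g(m,x) ≤ ∑_{m=0}^{r} m^{D}(m)·g(m,x). Consequently D maximizes the variance of the number of distinct jobs received among all balanced (n,k,r,c) assignments. -/
/-- `pairCount D m` : the number of unordered pairs of distinct jobs that are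
assigned together to exactly `m` common servers. -/
def pairCount {n k r c : ℕ} (D : BalancedAssignment n k r c) (m : ℕ) : ℕ :=
  (Finset.univ.filter (fun p : Fin n × Fin n =>
    p.1 < p.2 ∧ (D.assign p.1 ∩ D.assign p.2).card = m)).card
/-- The number of distinct jobs assigned to some server in the subset `S`. -/
def numDistinct {n k r c : ℕ} (D : BalancedAssignment n k r c)
    (S : Finset (Fin c)) : ℕ :=
  (Finset.univ.filter (fun i : Fin n => (D.assign i ∩ S).Nonempty)).card
/-- `gval c r m x` : the value of `g(m,x)`, the sum over `x`-subsets of the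
servers of `max(n_i - 1, 0) * max(n_j - 1, 0)` for a pair of jobs, each on `r`
of the `c` servers, sharing exactly `m` servers.  It is given by the closed
form `g(0,x)` together with the recursion for the difference `g(m+1,x)-g(m,x)`. -/
def gval (c r m x : ℕ) : ℤ :=
  (r : ℤ) ^ 2 * ch ((c : ℤ) - 2) ((x : ℤ) - 2)
    - 2 * r * ch ((c : ℤ) - 1) ((x : ℤ) - 1)
    + ch (c : ℤ) (x : ℤ)
    - 2 * ch ((c : ℤ) - r) (x : ℤ)
    + 2 * r * ch ((c : ℤ) - r - 1) ((x : ℤ) - 1)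
    + ch ((c : ℤ) - 2 * r) (x : ℤ)
  + ∑ j ∈ Finset.range m,
      (ch ((c : ℤ) - 2) ((x : ℤ) - 1) - 2 * ch ((c : ℤ) - r - 1) ((x : ℤ) - 1)
        + ch ((c : ℤ) - 2 * r + j) ((x : ℤ) - 1))
/-- Mean of the number of distinct jobs received when a uniformly random
`x`-subset of the `c` servers communicates with the master. -/
noncomputable def meanDistinct {n k r c : ℕ} (D : BalancedAssignment n k r c)
    (x : ℕ) : ℚ :=
  (∑ S ∈ Finset.powersetCard x (Finset.univ : Finset (Fin c)),
    (numDistinct D S : ℚ)) / (c.choose x)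

/-- Variance of the number of distinct jobs received when a uniformly random
`x`-subset of the `c` servers communicates with the master. -/
noncomputable def varDistinct {n k r c : ℕ} (D : BalancedAssignment n k r c)
    (x : ℕ) : ℚ :=
  (∑ S ∈ Finset.powersetCard x (Finset.univ : Finset (Fin c)),
    ((numDistinct D S : ℚ) - meanDistinct D x) ^ 2) / (c.choose x)

lemma ch_nonneg (a b : ℤ) : 0 ≤ ch a b := by
  unfold ch; split <;> positivity

lemma ch_mono_left {a a' : ℤ} (b : ℤ) (h : a ≤ a') : ch a b ≤ ch a' b := by
  unfold ch
  split
  · rename_i h1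
    rw [if_pos ⟨h1.1, h1.2.trans h⟩]
    exact_mod_cast Nat.choose_le_choose _ (Int.toNat_le_toNat h)
  · split
    · positivity
    · exact le_refl 0

lemma ch_pascal (a : ℤ) {b : ℤ} (hb : 1 ≤ b) : ch (a + 1) b = ch a b + ch a (b - 1) := by
  unfold ch
  rcases le_or_gt b a with h | h
  · rw [if_pos ⟨by omega, by omega⟩, if_pos ⟨by omega, h⟩, if_pos ⟨by omega, by omega⟩]
    have ha : 0 ≤ a := le_trans (le_trans one_pos.le hb) h
    obtain ⟨a', rfl⟩ := Int.eq_ofNat_of_zero_le ha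
    obtain ⟨b', rfl⟩ := Int.eq_ofNat_of_zero_le (le_trans (by norm_num) hb)
    have hb' : 1 ≤ b' := by exact_mod_cast hb
    obtain ⟨k, rfl⟩ := Nat.exists_eq_add_of_le hb'
    have h1 : ((a' : ℤ) + 1).toNat = a' + 1 := by omega
    have h2 : ((1 + k : ℕ) : ℤ).toNat = 1 + k := by omega
    have h3 : (((1 + k : ℕ) : ℤ) - 1).toNat = k := by omega
    rw [h1, h2, h3, Int.toNat_natCast]
    rw [show (1 + k) = k + 1 from by omega, Nat.choose_succ_succ']
    push_cast; ring
  · rcases eq_or_lt_of_le (show a ≤ b - 1 from by omega) with heq | hlt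
    · rw [if_pos ⟨by omega, by omega⟩, if_neg (by omega), if_pos ⟨by omega, by omega⟩]
      have ha : 0 ≤ a := by omega
      rw [show (a+1).toNat = a.toNat + 1 from by omega, show (b-1).toNat = a.toNat from by omega,
        show b.toNat = a.toNat + 1 from by omega]
      simp [Nat.choose_self, Nat.choose_succ_self_right]
    · rw [if_neg (by omega), if_neg (by omega), if_neg (by omega)]
      simp

lemma ch_telescope (a : ℤ) {b : ℤ} (hb : 1 ≤ b) (m : ℕ) :
    ch (a + m) b = ch a b + ∑ j ∈ Finset.range m, ch (a + j) (b - 1) := by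
  induction m with
  | zero => simp
  | succ m ih =>
    rw [Finset.sum_range_succ, show ((m+1:ℕ):ℤ) = (m:ℤ) + 1 from by push_cast; ring, show a + ((m:ℤ) + 1) = (a + m) + 1 from by ring,
      ch_pascal _ hb, ih]
    push_cast; ring

lemma chord {d : ℕ → ℤ} (hd : ∀ i j, i ≤ j → d i ≤ d j) {m r : ℕ} (hmr : m ≤ r) :
    (r : ℤ) * ∑ j ∈ Finset.range m, d j ≤ (m : ℤ) * ∑ j ∈ Finset.range r, d j := by
  have hsplit : ∑ j ∈ Finset.range r, d j
      = ∑ j ∈ Finset.range m, d j + ∑ j ∈ Finset.Ico m r, d j := by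
    rw [Finset.range_eq_Ico, Finset.range_eq_Ico]
    exact (Finset.sum_Ico_consecutive d (Nat.zero_le m) hmr).symm
  have key : ((r - m : ℕ) : ℤ) * ∑ j ∈ Finset.range m, d j
      ≤ (m : ℤ) * ∑ j ∈ Finset.Ico m r, d j := by
    have h1 : ∀ l ∈ Finset.Ico m r, ∑ j ∈ Finset.range m, d j ≤ (m : ℤ) * d l := by
      intro l hl
      rw [Finset.mem_Ico] at hl
      calc ∑ j ∈ Finset.range m, d j ≤ ∑ _j ∈ Finset.range m, d l :=
            Finset.sum_le_sum (fun j hj => hd j l (le_trans (le_of_lt (Finset.mem_range.mp hj)) hl.1))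
        _ = (m : ℤ) * d l := by simp [mul_comm]
    calc ((r - m : ℕ) : ℤ) * ∑ j ∈ Finset.range m, d j
        = ∑ _l ∈ Finset.Ico m r, ∑ j ∈ Finset.range m, d j := by
          simp [Nat.card_Ico, mul_comm]
      _ ≤ ∑ l ∈ Finset.Ico m r, (m : ℤ) * d l := Finset.sum_le_sum h1
      _ = (m : ℤ) * ∑ l ∈ Finset.Ico m r, d l := by rw [Finset.mul_sum]
  have hc : ((r - m : ℕ) : ℤ) = (r : ℤ) - m := by omega
  rw [hsplit]; rw [hc] at key; linarith

lemma majorize {r : ℕ} {pc pc' : ℕ → ℕ}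
    (hN : ∑ m ∈ Finset.range (r+1), pc m = ∑ m ∈ Finset.range (r+1), pc' m)
    (hM : ∑ m ∈ Finset.range (r+1), m * pc m = ∑ m ∈ Finset.range (r+1), m * pc' m)
    (hstretch : ∀ m, 0 < m → m < r → pc' m = 0)
    (F0 : ℤ) (d : ℕ → ℤ) (hd : ∀ i j, i ≤ j → d i ≤ d j) :
    ∑ m ∈ Finset.range (r+1), (pc m : ℤ) * (F0 + ∑ j ∈ Finset.range m, d j)
      ≤ ∑ m ∈ Finset.range (r+1), (pc' m : ℤ) * (F0 + ∑ j ∈ Finset.range m, d j) := by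
  set S : ℕ → ℤ := fun m => ∑ j ∈ Finset.range m, d j with hS
  rcases Nat.eq_zero_or_pos r with hr | hr
  · subst hr
    simp only [show (0:ℕ)+1 = 1 from rfl, Finset.range_one, Finset.sum_singleton] at hN ⊢
    simp [hS, hN]
  -- decompose both sides
  have decomp : ∀ q : ℕ → ℕ,
      ∑ m ∈ Finset.range (r+1), (q m : ℤ) * (F0 + S m)
        = F0 * (∑ m ∈ Finset.range (r+1), (q m : ℤ))
          + ∑ m ∈ Finset.range (r+1), (q m : ℤ) * S m := by
    intro q
    rw [Finset.mul_sum, ← Finset.sum_add_distrib]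
    exact Finset.sum_congr rfl (fun m _ => by ring)
  rw [decomp, decomp]
  have hNZ : (∑ m ∈ Finset.range (r+1), (pc m : ℤ)) = ∑ m ∈ Finset.range (r+1), (pc' m : ℤ) := by
    exact_mod_cast congrArg (Nat.cast : ℕ → ℤ) hN
  rw [hNZ]
  have hrz : (0:ℤ) < (r:ℤ) := by exact_mod_cast hr
  refine add_le_add (le_refl _) ?_
  -- RHS S-sum equals pc' r * S r
  have hrhs : ∑ m ∈ Finset.range (r+1), (pc' m : ℤ) * S m = (pc' r : ℤ) * S r := by
    refine Finset.sum_eq_single_of_mem r (Finset.self_mem_range_succ r) ?_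
    intro b _ hb
    rcases Nat.eq_zero_or_pos b with rfl | hbpos
    · simp [hS]
    · rename_i hbr
      have : pc' b = 0 := hstretch b hbpos (by rcases Finset.mem_range.mp hbr with h; omega)
      simp [this]
  have hM' : ∑ m ∈ Finset.range (r+1), (m : ℤ) * pc' m = (r : ℤ) * pc' r := by
    refine Finset.sum_eq_single_of_mem r (Finset.self_mem_range_succ r) ?_
    intro b hbr hb
    rcases Nat.eq_zero_or_pos b with rfl | hbpos
    · simp
    · have : pc' b = 0 := hstretch b hbpos (by have := Finset.mem_range.mp hbr; omega)
      simp [this]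
  rw [hrhs]
  have hmul : (r : ℤ) * ∑ m ∈ Finset.range (r+1), (pc m : ℤ) * S m
      ≤ (r : ℤ) * ((pc' r : ℤ) * S r) := by
    calc (r : ℤ) * ∑ m ∈ Finset.range (r+1), (pc m : ℤ) * S m
        = ∑ m ∈ Finset.range (r+1), (pc m : ℤ) * ((r:ℤ) * S m) := by
          rw [Finset.mul_sum]; exact Finset.sum_congr rfl (fun m _ => by ring)
      _ ≤ ∑ m ∈ Finset.range (r+1), (pc m : ℤ) * ((m:ℤ) * S r) := by
          refine Finset.sum_le_sum (fun m hm => ?_)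
          have hmr : m ≤ r := by have := Finset.mem_range.mp hm; omega
          exact mul_le_mul_of_nonneg_left (chord hd hmr) (by positivity)
      _ = (∑ m ∈ Finset.range (r+1), (m:ℤ) * pc m) * S r := by
          rw [Finset.sum_mul]; exact Finset.sum_congr rfl (fun m _ => by ring)
      _ = ((r : ℤ) * pc' r) * S r := by
          rw [show (∑ m ∈ Finset.range (r+1), (m:ℤ) * pc m)
            = ∑ m ∈ Finset.range (r+1), (m:ℤ) * pc' m from by exact_mod_cast congrArg (Nat.cast : ℕ → ℤ) hM, hM']
      _ = (r : ℤ) * ((pc' r : ℤ) * S r) := by ring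
  exact le_of_mul_le_mul_left hmul hrz

lemma pairs_in_card {α : Type*} [Fintype α] [DecidableEq α] [LinearOrder α] (T : Finset α) :
    (Finset.univ.filter fun p : α × α => p.1 < p.2 ∧ p.1 ∈ T ∧ p.2 ∈ T).card
      = T.card.choose 2 := by
  classical
  set X := (T ×ˢ T).filter (fun p => p.1 < p.2) with hX
  set Y := (T ×ˢ T).filter (fun p => p.2 < p.1) with hY
  have hXeq : (Finset.univ.filter fun p : α × α => p.1 < p.2 ∧ p.1 ∈ T ∧ p.2 ∈ T) = X := by
    ext p; simp only [hX, Finset.mem_filter, Finset.mem_univ, true_and, Finset.mem_product]; tauto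
  have hYimg : Y = X.image Prod.swap := by
    ext p
    simp only [hX, hY, Finset.mem_filter, Finset.mem_product, Finset.mem_image]
    constructor
    · rintro ⟨⟨h1, h2⟩, h3⟩
      exact ⟨p.swap, ⟨⟨h2, h1⟩, h3⟩, Prod.swap_swap p⟩
    · rintro ⟨q, ⟨⟨h1, h2⟩, h3⟩, rfl⟩
      exact ⟨⟨h2, h1⟩, h3⟩
  have hcardY : Y.card = X.card := by
    rw [hYimg]; exact Finset.card_image_of_injective _ Prod.swap_injective
  have hdisj : Disjoint X Y := by
    rw [Finset.disjoint_left]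
    intro p hp hq
    rw [hX, Finset.mem_filter] at hp
    rw [hY, Finset.mem_filter] at hq
    exact absurd hq.2 (lt_asymm hp.2)
  have hunion : X ∪ Y = T.offDiag := by
    ext p
    simp only [hX, hY, Finset.mem_union, Finset.mem_filter, Finset.mem_product,
      Finset.mem_offDiag]
    constructor
    · rintro (⟨⟨h1, h2⟩, h3⟩ | ⟨⟨h1, h2⟩, h3⟩)
      · exact ⟨h1, h2, ne_of_lt h3⟩
      · exact ⟨h1, h2, (ne_of_lt h3).symm⟩
    · rintro ⟨h1, h2, h3⟩
      rcases lt_or_gt_of_ne h3 with h | h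
      · exact Or.inl ⟨⟨h1, h2⟩, h⟩
      · exact Or.inr ⟨⟨h1, h2⟩, h⟩
  have hcard : X.card + Y.card = T.card * T.card - T.card := by
    rw [← Finset.card_union_of_disjoint hdisj, hunion, Finset.offDiag_card]
  set t := T.card with ht
  have h2 : 2 * X.card = t * (t - 1) := by
    have : t * t - t = t * (t - 1) := by
      cases t with
      | zero => simp
      | succ s => rw [Nat.succ_sub_one, Nat.mul_succ, Nat.add_sub_cancel]
    have h3 : 2 * X.card = X.card + Y.card := by omega
    rw [h3, hcard, this]
  rw [hXeq, Nat.choose_two_right]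
  have hgen : ∀ u : ℕ, 2 * X.card = u → X.card = u / 2 := by intro u h; omega
  exact hgen _ h2

def pairsLT (n : ℕ) : Finset (Fin n × Fin n) := Finset.univ.filter (fun p => p.1 < p.2)

variable {n k r c : ℕ} (D : BalancedAssignment n k r c)

lemma pairCount_eq (m : ℕ) : pairCount D m
    = ((pairsLT n).filter (fun p => (D.assign p.1 ∩ D.assign p.2).card = m)).card := by
  unfold pairCount pairsLT
  rw [Finset.filter_filter]

lemma inter_card_le (p : Fin n × Fin n) : (D.assign p.1 ∩ D.assign p.2).card ≤ r := by
  calc (D.assign p.1 ∩ D.assign p.2).card ≤ (D.assign p.1).card :=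
        Finset.card_le_card Finset.inter_subset_left
    _ = r := D.job_deg p.1

lemma maps_to_range (p : Fin n × Fin n) (_ : p ∈ pairsLT n) :
    (D.assign p.1 ∩ D.assign p.2).card ∈ Finset.range (r + 1) :=
  Finset.mem_range.mpr (Nat.lt_succ_of_le (inter_card_le D p))

lemma sum_pairCount : ∑ m ∈ Finset.range (r+1), pairCount D m = (pairsLT n).card := by
  rw [Finset.card_eq_sum_card_fiberwise (maps_to_range D)]
  exact Finset.sum_congr rfl (fun m _ => pairCount_eq D m)

lemma card_eq_sum_ite {β : Type*} [Fintype β] [DecidableEq β] (t : Finset β) :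
    t.card = ∑ s : β, if s ∈ t then 1 else 0 := by
  rw [← Finset.card_filter]
  congr 1
  exact (Finset.filter_univ_mem t).symm

lemma sum_mul_pairCount : ∑ m ∈ Finset.range (r+1), m * pairCount D m = c * Nat.choose k 2 := by
  have h1 : ∑ m ∈ Finset.range (r+1), m * pairCount D m
      = ∑ p ∈ pairsLT n, (D.assign p.1 ∩ D.assign p.2).card := by
    rw [← Finset.sum_fiberwise_of_maps_to (maps_to_range D)
      (fun p => (D.assign p.1 ∩ D.assign p.2).card)]
    refine Finset.sum_congr rfl fun m _ => ?_
    rw [pairCount_eq]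
    rw [Finset.sum_congr rfl (fun p hp => (Finset.mem_filter.mp hp).2), Finset.sum_const,
      smul_eq_mul, mul_comm]
  rw [h1]
  calc ∑ p ∈ pairsLT n, (D.assign p.1 ∩ D.assign p.2).card
      = ∑ p ∈ pairsLT n, ∑ s : Fin c,
          if s ∈ D.assign p.1 ∧ s ∈ D.assign p.2 then 1 else 0 := by
        refine Finset.sum_congr rfl fun p _ => ?_
        rw [card_eq_sum_ite]
        exact Finset.sum_congr rfl fun s _ => by simp [Finset.mem_inter]
    _ = ∑ s : Fin c, ∑ p ∈ pairsLT n,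
          (if s ∈ D.assign p.1 ∧ s ∈ D.assign p.2 then 1 else 0) := Finset.sum_comm
    _ = ∑ s : Fin c, ((pairsLT n).filter
          (fun p => s ∈ D.assign p.1 ∧ s ∈ D.assign p.2)).card := by
        exact Finset.sum_congr rfl fun s _ => (Finset.card_filter _ _).symm
    _ = ∑ _s : Fin c, Nat.choose k 2 := by
        refine Finset.sum_congr rfl fun s _ => ?_
        have hT : ((pairsLT n).filter (fun p => s ∈ D.assign p.1 ∧ s ∈ D.assign p.2))
            = (Finset.univ.filter fun p : Fin n × Fin n => p.1 < p.2
                ∧ p.1 ∈ (Finset.univ.filter (fun i : Fin n => s ∈ D.assign i))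
                ∧ p.2 ∈ (Finset.univ.filter (fun i : Fin n => s ∈ D.assign i))) := by
          unfold pairsLT
          rw [Finset.filter_filter]
          exact Finset.filter_congr fun p _ => by simp
        rw [hT, pairs_in_card, D.server_deg s]
    _ = c * Nat.choose k 2 := by simp [mul_comm]

section VarCount
variable {c : ℕ} (x : ℕ)

def Cset (c x : ℕ) : Finset (Finset (Fin c)) :=
  Finset.powersetCard x (Finset.univ : Finset (Fin c))

lemma Cset_card : (Cset c x).card = c.choose x := by
  rw [Cset, Finset.card_powersetCard, Finset.card_univ, Fintype.card_fin]

lemma miss_filter (A : Finset (Fin c)) :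
    (Cset c x).filter (fun S => A ∩ S = ∅) = Finset.powersetCard x Aᶜ := by
  ext S
  simp only [Cset, Finset.mem_filter, Finset.mem_powersetCard, Finset.subset_univ, true_and]
  constructor
  · rintro ⟨hcard2, hempty⟩
    refine ⟨fun a ha => Finset.mem_compl.mpr fun haA => ?_, hcard2⟩
    · have : a ∈ A ∩ S := Finset.mem_inter.mpr ⟨haA, ha⟩
      rw [hempty] at this
      exact absurd this (Finset.notMem_empty a)
  · rintro ⟨hsub, hcard⟩
    refine ⟨hcard, Finset.eq_empty_iff_forall_notMem.mpr fun a ha => ?_⟩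
    rw [Finset.mem_inter] at ha
    exact Finset.mem_compl.mp (hsub ha.2) ha.1

lemma miss_card (A : Finset (Fin c)) :
    ((Cset c x).filter (fun S => A ∩ S = ∅)).card = (c - A.card).choose x := by
  rw [miss_filter, Finset.card_powersetCard, Finset.card_compl, Fintype.card_fin]

lemma hit_card (A : Finset (Fin c)) :
    ((Cset c x).filter (fun S => (A ∩ S).Nonempty)).card + (c - A.card).choose x
      = c.choose x := by
  have h := Finset.card_filter_add_card_filter_not
    (s := Cset c x) (p := fun S => (A ∩ S).Nonempty)
  have h2 : (Cset c x).filter (fun S => ¬ (A ∩ S).Nonempty)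
      = (Cset c x).filter (fun S => A ∩ S = ∅) := by
    refine Finset.filter_congr fun S _ => ?_
    rw [Finset.not_nonempty_iff_eq_empty]
  rw [h2, miss_card] at h
  rw [h, Cset_card]

lemma W_eq (A B : Finset (Fin c)) :
    ((Cset c x).filter (fun S => (A ∩ S).Nonempty ∧ (B ∩ S).Nonempty)).card
        + (c - A.card).choose x + (c - B.card).choose x
      = c.choose x + (c - (A ∪ B).card).choose x := by
  set U := (Cset c x).filter (fun S => A ∩ S = ∅) with hU
  set V := (Cset c x).filter (fun S => B ∩ S = ∅) with hV
  have h1 := Finset.card_filter_add_card_filter_not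
    (s := Cset c x) (p := fun S => (A ∩ S).Nonempty ∧ (B ∩ S).Nonempty)
  have h2 : (Cset c x).filter (fun S => ¬ ((A ∩ S).Nonempty ∧ (B ∩ S).Nonempty)) = U ∪ V := by
    rw [hU, hV, ← Finset.filter_or]
    refine Finset.filter_congr fun S _ => ?_
    rw [not_and_or, Finset.not_nonempty_iff_eq_empty, Finset.not_nonempty_iff_eq_empty]
  have h3 : U ∩ V = (Cset c x).filter (fun S => (A ∪ B) ∩ S = ∅) := by
    rw [hU, hV, ← Finset.filter_and]
    refine Finset.filter_congr fun S _ => ?_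
    rw [Finset.union_inter_distrib_right, Finset.union_eq_empty]
  have h4 := Finset.card_union_add_card_inter U V
  rw [h3, miss_card] at h4
  rw [h2] at h1
  have h5 := miss_card x A
  have h6 := miss_card x B
  rw [← hU] at h5
  rw [← hV] at h6
  rw [Cset_card] at h1
  omega

end VarCount

def Wpair {c : ℕ} (x : ℕ) (A B : Finset (Fin c)) : ℕ :=
  ((Cset c x).filter (fun S => (A ∩ S).Nonempty ∧ (B ∩ S).Nonempty)).card

section SQ
variable {n k r c : ℕ} (D : BalancedAssignment n k r c) (x : ℕ)

lemma numDistinct_eq_sum (S : Finset (Fin c)) :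
    numDistinct D S = ∑ i : Fin n, if (D.assign i ∩ S).Nonempty then 1 else 0 :=
  Finset.card_filter _ _

lemma sum_sq_eq : ∑ S ∈ Cset c x, (numDistinct D S)^2
    = ∑ p : Fin n × Fin n, Wpair x (D.assign p.1) (D.assign p.2) := by
  have step : ∀ S ∈ Cset c x, (numDistinct D S)^2
      = ∑ p : Fin n × Fin n,
          (if (D.assign p.1 ∩ S).Nonempty ∧ (D.assign p.2 ∩ S).Nonempty then 1 else 0) := by
    intro S _
    rw [numDistinct_eq_sum, sq, Finset.sum_mul_sum, Fintype.sum_prod_type]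
    refine Finset.sum_congr rfl fun i _ => Finset.sum_congr rfl fun j _ => ?_
    by_cases h1 : (D.assign i ∩ S).Nonempty <;> by_cases h2 : (D.assign j ∩ S).Nonempty <;>
      simp [h1, h2]
  rw [Finset.sum_congr rfl step, Finset.sum_comm]
  exact Finset.sum_congr rfl fun p _ => (Finset.card_filter _ _).symm

lemma sum_filter_gt_eq : ∑ p ∈ Finset.univ.filter (fun p : Fin n × Fin n => p.2 < p.1),
      Wpair x (D.assign p.1) (D.assign p.2)
    = ∑ p ∈ pairsLT n, Wpair x (D.assign p.1) (D.assign p.2) := by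
  refine Finset.sum_bij' (fun p _ => p.swap) (fun p _ => p.swap) ?_ ?_ ?_ ?_ ?_
  · intro p hp
    simp only [Finset.mem_filter, Finset.mem_univ, true_and] at hp
    simp [pairsLT, hp]
  · intro p hp
    simp only [pairsLT, Finset.mem_filter, Finset.mem_univ, true_and] at hp
    simp [hp]
  · intro p _; exact Prod.swap_swap p
  · intro p _; exact Prod.swap_swap p
  · intro p _
    unfold Wpair
    congr 1
    exact Finset.filter_congr fun S _ => by rw [and_comm]; rfl

lemma sum_filter_eq_eq : ∑ p ∈ Finset.univ.filter (fun p : Fin n × Fin n => p.1 = p.2),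
      Wpair x (D.assign p.1) (D.assign p.2)
    = ∑ i : Fin n, Wpair x (D.assign i) (D.assign i) := by
  have himg : Finset.univ.filter (fun p : Fin n × Fin n => p.1 = p.2)
      = Finset.univ.image (fun i => (i, i)) := by
    ext p
    simp only [Finset.mem_filter, Finset.mem_univ, true_and, Finset.mem_image]
    constructor
    · intro h; exact ⟨p.1, Prod.ext rfl h⟩
    · rintro ⟨i, rfl⟩; rfl
  rw [himg, Finset.sum_image (fun i _ j _ h => by injection h)]

lemma sum_pairs_split : ∑ p : Fin n × Fin n, Wpair x (D.assign p.1) (D.assign p.2)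
    = 2 * (∑ p ∈ pairsLT n, Wpair x (D.assign p.1) (D.assign p.2))
      + ∑ i : Fin n, Wpair x (D.assign i) (D.assign i) := by
  classical
  set F : Fin n × Fin n → ℕ := fun p => Wpair x (D.assign p.1) (D.assign p.2) with hF
  have h1 : ∑ p ∈ (Finset.univ : Finset (Fin n × Fin n)), F p
      = ∑ p ∈ pairsLT n, F p
        + ∑ p ∈ Finset.univ.filter (fun p : Fin n × Fin n => ¬ p.1 < p.2), F p :=
    (Finset.sum_filter_add_sum_filter_not _ _ _).symm
  have h2 : ∑ p ∈ Finset.univ.filter (fun p : Fin n × Fin n => ¬ p.1 < p.2), F p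
      = ∑ p ∈ (Finset.univ.filter (fun p : Fin n × Fin n => ¬ p.1 < p.2)).filter
          (fun p => p.2 < p.1), F p
        + ∑ p ∈ (Finset.univ.filter (fun p : Fin n × Fin n => ¬ p.1 < p.2)).filter
          (fun p => ¬ p.2 < p.1), F p :=
    (Finset.sum_filter_add_sum_filter_not _ _ _).symm
  have h3 : (Finset.univ.filter (fun p : Fin n × Fin n => ¬ p.1 < p.2)).filter
      (fun p => p.2 < p.1) = Finset.univ.filter (fun p : Fin n × Fin n => p.2 < p.1) := by
    rw [Finset.filter_filter]
    exact Finset.filter_congr fun p _ => by constructor <;> intro h <;>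
      [exact h.2; exact ⟨not_lt_of_gt h, h⟩]
  have h4 : (Finset.univ.filter (fun p : Fin n × Fin n => ¬ p.1 < p.2)).filter
      (fun p => ¬ p.2 < p.1) = Finset.univ.filter (fun p : Fin n × Fin n => p.1 = p.2) := by
    rw [Finset.filter_filter]
    refine Finset.filter_congr fun p _ => ?_
    constructor
    · rintro ⟨ha, hb⟩; exact le_antisymm (not_lt.mp hb) (not_lt.mp ha)
    · intro h; rw [h]; exact ⟨lt_irrefl _, lt_irrefl _⟩
  rw [h1, h2, h3, h4, sum_filter_gt_eq, sum_filter_eq_eq]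
  have hFr : ∑ p ∈ pairsLT n, F p = ∑ p ∈ pairsLT n, Wpair x (D.assign p.1) (D.assign p.2) := rfl
  rw [hFr]
  ring

end SQ

section MORE
variable {n k r c : ℕ} (D : BalancedAssignment n k r c) (x : ℕ)

-- imported from earlier files (assume proven): hit_card, W_eq, miss_card, Cset_card
lemma inter_card_le2 (p : Fin n × Fin n) : (D.assign p.1 ∩ D.assign p.2).card ≤ r :=
  le_of_le_of_eq (Finset.card_le_card Finset.inter_subset_left) (D.job_deg p.1)

lemma union_card (p : Fin n × Fin n) :
    (D.assign p.1 ∪ D.assign p.2).card = 2 * r - (D.assign p.1 ∩ D.assign p.2).card := by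
  have h := Finset.card_union_add_card_inter (D.assign p.1) (D.assign p.2)
  rw [D.job_deg p.1, D.job_deg p.2] at h
  omega

lemma sum_phi (φ : ℕ → ℤ) :
    ∑ p ∈ pairsLT n, φ ((D.assign p.1 ∩ D.assign p.2).card)
      = ∑ m ∈ Finset.range (r+1), (pairCount D m : ℤ) * φ m := by
  have hmaps : ∀ p ∈ pairsLT n, (D.assign p.1 ∩ D.assign p.2).card ∈ Finset.range (r+1) :=
    fun p _ => Finset.mem_range.mpr (Nat.lt_succ_of_le (inter_card_le2 D p))
  rw [← Finset.sum_fiberwise_of_maps_to hmaps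
    (fun p => φ ((D.assign p.1 ∩ D.assign p.2).card))]
  refine Finset.sum_congr rfl fun m _ => ?_
  have hpc : pairCount D m
      = ((pairsLT n).filter (fun p => (D.assign p.1 ∩ D.assign p.2).card = m)).card := by
    unfold pairCount pairsLT
    rw [Finset.filter_filter]
  rw [hpc]
  rw [Finset.sum_congr rfl
    (fun p hp => by rw [(Finset.mem_filter.mp hp).2] : ∀ p ∈ (pairsLT n).filter
      (fun p => (D.assign p.1 ∩ D.assign p.2).card = m),
        φ ((D.assign p.1 ∩ D.assign p.2).card) = φ m),
    Finset.sum_const, nsmul_eq_mul]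
end MORE

section FINAL
variable {n k r c : ℕ}

lemma sum_numDistinct (D : BalancedAssignment n k r c) (x : ℕ) :
    ∑ S ∈ Cset c x, numDistinct D S = n * (c.choose x - (c - r).choose x) := by
  have step1 : ∑ S ∈ Cset c x, numDistinct D S
      = ∑ i : Fin n, ((Cset c x).filter (fun S => (D.assign i ∩ S).Nonempty)).card := by
    rw [Finset.sum_congr rfl (fun S _ => numDistinct_eq_sum D S), Finset.sum_comm]
    exact Finset.sum_congr rfl fun i _ => (Finset.card_filter _ _).symm
  rw [step1]
  have step2 : ∀ i : Fin n, ((Cset c x).filter (fun S => (D.assign i ∩ S).Nonempty)).card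
      = c.choose x - (c - r).choose x := by
    intro i
    have h := hit_card x (D.assign i)
    rw [D.job_deg i] at h
    omega
  rw [Finset.sum_congr rfl (fun i _ => step2 i), Finset.sum_const, Finset.card_univ,
    Fintype.card_fin, smul_eq_mul]

lemma Wdiag (x : ℕ) (A : Finset (Fin c)) :
    Wpair x A A + (c - A.card).choose x = c.choose x := by
  have heq : (Cset c x).filter (fun S => (A ∩ S).Nonempty ∧ (A ∩ S).Nonempty)
      = (Cset c x).filter (fun S => (A ∩ S).Nonempty) :=
    Finset.filter_congr fun S _ => and_self_iff
  unfold Wpair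
  rw [heq]
  exact hit_card x A

lemma Wp_val (D : BalancedAssignment n k r c) (x : ℕ) (p : Fin n × Fin n) :
    (Wpair x (D.assign p.1) (D.assign p.2) : ℤ)
      = (c.choose x : ℤ) - 2 * ((c - r).choose x : ℤ)
        + (((c - (2*r - (D.assign p.1 ∩ D.assign p.2).card)).choose x : ℕ) : ℤ) := by
  have h := W_eq x (D.assign p.1) (D.assign p.2)
  rw [D.job_deg, D.job_deg, union_card D p] at h
  unfold Wpair
  omega

lemma choose_eq_ch {x : ℕ} (hx : 1 ≤ x) {m : ℕ} (hm : m ≤ 2*r) :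
    (((c - (2*r - m)).choose x : ℕ) : ℤ) = ch ((c:ℤ) - 2*r + m) ((x:ℤ)) := by
  unfold ch
  split
  · rename_i h
    have h1 : ((x:ℤ)).toNat = x := Int.toNat_natCast x
    have h2 : ((c:ℤ) - 2*r + m).toNat = c - (2*r - m) := by omega
    rw [h1, h2]
  · rename_i h
    push_neg at h
    have hlt := h (Int.natCast_nonneg x)
    have hc : c - (2*r - m) < x := by omega
    rw [Nat.choose_eq_zero_of_lt hc]
    simp

lemma sumsq_val (D : BalancedAssignment n k r c) (x : ℕ) :
    ((∑ S ∈ Cset c x, (numDistinct D S)^2 : ℕ) : ℤ)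
      = (n : ℤ) * ((c.choose x : ℤ) - ((c - r).choose x : ℤ))
        + 2 * ( ((pairsLT n).card : ℤ) * ((c.choose x : ℤ) - 2 * ((c - r).choose x : ℤ))
          + ∑ m ∈ Finset.range (r+1), (pairCount D m : ℤ)
              * (((c - (2*r - m)).choose x : ℕ) : ℤ) ) := by
  have h0 : (∑ S ∈ Cset c x, (numDistinct D S)^2 : ℕ)
      = 2 * (∑ p ∈ pairsLT n, Wpair x (D.assign p.1) (D.assign p.2))
        + ∑ i : Fin n, Wpair x (D.assign i) (D.assign i) := by
    rw [sum_sq_eq, sum_pairs_split]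
  rw [h0]
  push_cast
  have hdiag : ∑ i : Fin n, (Wpair x (D.assign i) (D.assign i) : ℤ)
      = (n:ℤ) * ((c.choose x : ℤ) - ((c - r).choose x : ℤ)) := by
    have hterm : ∀ i : Fin n, (Wpair x (D.assign i) (D.assign i) : ℤ)
        = (c.choose x : ℤ) - ((c - r).choose x : ℤ) := by
      intro i
      have h := Wdiag x (D.assign i)
      rw [D.job_deg i] at h
      have hle : (c - r).choose x ≤ c.choose x := by omega
      omega
    rw [Finset.sum_congr rfl (fun i _ => hterm i), Finset.sum_const, Finset.card_univ,
      Fintype.card_fin, nsmul_eq_mul]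
  have hoff : ∑ p ∈ pairsLT n, (Wpair x (D.assign p.1) (D.assign p.2) : ℤ)
      = ((pairsLT n).card : ℤ) * ((c.choose x : ℤ) - 2 * ((c - r).choose x : ℤ))
        + ∑ m ∈ Finset.range (r+1), (pairCount D m : ℤ)
            * (((c - (2*r - m)).choose x : ℕ) : ℤ) := by
    rw [Finset.sum_congr rfl (fun p _ => Wp_val D x p), Finset.sum_add_distrib,
      Finset.sum_const, nsmul_eq_mul,
      sum_phi D (fun m => (((c - (2*r - m)).choose x : ℕ) : ℤ))]
  rw [hdiag, hoff]
  ring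

end FINAL

/-- If a stretched compact balanced `(n,k,r,c)` assignment `D` exists, then for
every `1 ≤ x ≤ c` and every balanced `(n,k,r,c)` assignment `D₁`,
`∑_m m^{D₁}(m)·g(m,x) ≤ ∑_m m^{D}(m)·g(m,x)`; consequently `D` maximizes the
variance of the number of distinct jobs received. -/
theorem stretched_compact_max_variance (n k r c : ℕ)
    (D D₁ : BalancedAssignment n k r c)
    (hstretch : ∀ m, 0 < m → m < r → pairCount D m = 0)
    (x : ℕ) (hx1 : 1 ≤ x) (hxc : x ≤ c) :
    (∑ m ∈ Finset.range (r + 1), (pairCount D₁ m : ℤ) * gval c r m x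
        ≤ ∑ m ∈ Finset.range (r + 1), (pairCount D m : ℤ) * gval c r m x)
      ∧ varDistinct D₁ x ≤ varDistinct D x := by
  have hN : ∑ m ∈ Finset.range (r+1), pairCount D₁ m
      = ∑ m ∈ Finset.range (r+1), pairCount D m := by
    rw [sum_pairCount, sum_pairCount]
  have hM : ∑ m ∈ Finset.range (r+1), m * pairCount D₁ m
      = ∑ m ∈ Finset.range (r+1), m * pairCount D m := by
    rw [sum_mul_pairCount, sum_mul_pairCount]
  constructor
  · -- gval part
    have hdg : ∀ i j : ℕ, i ≤ j →
        (ch ((c : ℤ) - 2) ((x : ℤ) - 1) - 2 * ch ((c : ℤ) - r - 1) ((x : ℤ) - 1)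
          + ch ((c : ℤ) - 2 * r + i) ((x : ℤ) - 1))
        ≤ (ch ((c : ℤ) - 2) ((x : ℤ) - 1) - 2 * ch ((c : ℤ) - r - 1) ((x : ℤ) - 1)
          + ch ((c : ℤ) - 2 * r + j) ((x : ℤ) - 1)) := by
      intro i j hij
      have := ch_mono_left (a := (c : ℤ) - 2 * r + i) (a' := (c : ℤ) - 2 * r + j)
        ((x : ℤ) - 1) (by omega)
      linarith
    have key := majorize hN hM hstretch
      ((r : ℤ) ^ 2 * ch ((c : ℤ) - 2) ((x : ℤ) - 2)
        - 2 * r * ch ((c : ℤ) - 1) ((x : ℤ) - 1)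
        + ch (c : ℤ) (x : ℤ)
        - 2 * ch ((c : ℤ) - r) (x : ℤ)
        + 2 * r * ch ((c : ℤ) - r - 1) ((x : ℤ) - 1)
        + ch ((c : ℤ) - 2 * r) (x : ℤ))
      (fun j : ℕ => ch ((c : ℤ) - 2) ((x : ℤ) - 1) - 2 * ch ((c : ℤ) - r - 1) ((x : ℤ) - 1)
        + ch ((c : ℤ) - 2 * r + j) ((x : ℤ) - 1)) hdg
    exact key
  · -- variance part
    have hx1' : (1 : ℤ) ≤ (x : ℤ) := by exact_mod_cast hx1
    have hkey : ∑ m ∈ Finset.range (r+1), (pairCount D₁ m : ℤ)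
          * (((c - (2*r - m)).choose x : ℕ) : ℤ)
        ≤ ∑ m ∈ Finset.range (r+1), (pairCount D m : ℤ)
          * (((c - (2*r - m)).choose x : ℕ) : ℤ) := by
      have hrw : ∀ (E : BalancedAssignment n k r c),
          ∑ m ∈ Finset.range (r+1), (pairCount E m : ℤ)
              * (((c - (2*r - m)).choose x : ℕ) : ℤ)
          = ∑ m ∈ Finset.range (r+1), (pairCount E m : ℤ)
              * (ch ((c:ℤ) - 2*r) (x:ℤ)
                + ∑ j ∈ Finset.range m, ch (((c:ℤ) - 2*r) + j) ((x:ℤ) - 1)) := by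
        intro E
        refine Finset.sum_congr rfl fun m hm => ?_
        congr 1
        rw [choose_eq_ch hx1 (show m ≤ 2*r by have := Finset.mem_range.mp hm; omega)]
        rw [← ch_telescope ((c:ℤ) - 2*r) hx1' m]
      rw [hrw D₁, hrw D]
      exact majorize hN hM hstretch (ch ((c:ℤ) - 2*r) (x:ℤ))
        (fun j : ℕ => ch (((c:ℤ) - 2*r) + j) ((x:ℤ) - 1))
        (fun i j hij => ch_mono_left _ (by omega))
    have hsq : (∑ S ∈ Cset c x, (numDistinct D₁ S)^2)
        ≤ (∑ S ∈ Cset c x, (numDistinct D S)^2) := by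
      have h1 := sumsq_val D₁ x
      have h2 := sumsq_val D x
      have : ((∑ S ∈ Cset c x, (numDistinct D₁ S)^2 : ℕ) : ℤ)
          ≤ ((∑ S ∈ Cset c x, (numDistinct D S)^2 : ℕ) : ℤ) := by
        rw [h1, h2]; linarith
      exact_mod_cast this
    have hsumN : ∑ S ∈ Cset c x, numDistinct D₁ S = ∑ S ∈ Cset c x, numDistinct D S := by
      rw [sum_numDistinct, sum_numDistinct]
    have hpos : (0:ℚ) < ((c.choose x : ℕ) : ℚ) := by
      exact_mod_cast Nat.choose_pos hxc
    have e1 : ∀ (E : BalancedAssignment n k r c),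
        (∑ S ∈ Finset.powersetCard x (Finset.univ : Finset (Fin c)), (numDistinct E S : ℚ))
          = ((∑ S ∈ Cset c x, numDistinct E S : ℕ) : ℚ) := fun E => by
      rw [Nat.cast_sum]; rfl
    have hmean : meanDistinct D₁ x = meanDistinct D x := by
      unfold meanDistinct
      rw [e1, e1, hsumN]
    unfold varDistinct
    rw [hmean]
    apply (div_le_div_iff_of_pos_right hpos).mpr
    set μ := meanDistinct D x with hμ
    have e2 : ∀ (E : BalancedAssignment n k r c),
        ∑ S ∈ Finset.powersetCard x (Finset.univ : Finset (Fin c)),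
            ((numDistinct E S : ℚ) - μ)^2
          = (∑ S ∈ Cset c x, ((numDistinct E S : ℕ) : ℚ)^2)
            - 2*μ*(∑ S ∈ Cset c x, ((numDistinct E S : ℕ) : ℚ))
            + ((Cset c x).card : ℚ) * μ^2 := by
      intro E
      have hexp : ∀ S ∈ Finset.powersetCard x (Finset.univ : Finset (Fin c)),
          ((numDistinct E S : ℚ) - μ)^2
            = ((numDistinct E S : ℕ) : ℚ)^2 - 2*μ*((numDistinct E S : ℕ) : ℚ) + μ^2 :=
        fun S _ => by ring
      rw [Finset.sum_congr rfl hexp, Finset.sum_add_distrib, Finset.sum_sub_distrib,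
        ← Finset.mul_sum, Finset.sum_const, nsmul_eq_mul]
      rfl
    rw [e2 D₁, e2 D]
    have hXq : (∑ S ∈ Cset c x, ((numDistinct D₁ S : ℕ) : ℚ))
        = ∑ S ∈ Cset c x, ((numDistinct D S : ℕ) : ℚ) := by
      rw [← Nat.cast_sum, ← Nat.cast_sum, hsumN]
    have hX2q : (∑ S ∈ Cset c x, ((numDistinct D₁ S : ℕ) : ℚ)^2)
        ≤ ∑ S ∈ Cset c x, ((numDistinct D S : ℕ) : ℚ)^2 := by
      have c1 : (∑ S ∈ Cset c x, ((numDistinct D₁ S : ℕ) : ℚ)^2)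
          = ((∑ S ∈ Cset c x, (numDistinct D₁ S)^2 : ℕ) : ℚ) := by push_cast; rfl
      have c2 : (∑ S ∈ Cset c x, ((numDistinct D S : ℕ) : ℚ)^2)
          = ((∑ S ∈ Cset c x, (numDistinct D S)^2 : ℕ) : ℚ) := by push_cast; rfl
      rw [c1, c2]
      exact_mod_cast hsq
    rw [hXq]
    linarith [hX2q]
end
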